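/- arXiv:2409.01680 — 5 statements merged into one kernel-verified Lean document; each statement's English description precedes it below -/
import Mathlib

section
/- Let H = (V, E) be a hypergraph, let k be a positive integer, and let π₁ and π₂ be equivalent linear orderings of V (i.e., π₂ is obtained from π₁ by cyclic shifts, or by reversing the order and then applying cyclic shifts). Then π₁ is an (AB)^k-free ordering of H if and only if π₂ is an (AB)^k-free ordering of H. -/
/-- `π` is a linear ordering of the vertex set `Vs`: a duplicate-free list
consisting of exactly the elements of `Vs`. -/
def IsOrderingOf {α : Type*} (Vs : Set α) (π : List α) : Prop :=
  π.Nodup ∧ ∀ v, v ∈ π ↔ v ∈ Vs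

/-- The sets `A`, `B` form an alternating pattern of length `n` with respect to
the ordering `π`: there are `n` vertices occurring in this order in `π`, those
at even positions belonging to `A \ B` and those at odd positions to `B \ A`.
For `n = 2k` this is an `(AB)^k` pattern; for `n = 2k+1` it is an `(AB)^k A`
pattern (so `n = 4` gives `ABAB` and `n = 5` gives `ABABA`). -/
def FormPattern {α : Type*} (n : ℕ) (A B : Set α) (π : List α) : Prop :=
  ∃ w : List α, w.Sublist π ∧ w.length = n ∧
    ∀ (i : ℕ) (h : i < w.length),
      (i % 2 = 0 → w[i]'h ∈ A \ B) ∧ (i % 2 = 1 → w[i]'h ∈ B \ A)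

/-- `π` is a pattern-free ordering for the edge set `E`: no pair of edges forms
an alternating pattern of length `n` with respect to `π`. -/
def FreeOrdering {α : Type*} (n : ℕ) (E : Set (Set α)) (π : List α) : Prop :=
  ∀ A ∈ E, ∀ B ∈ E, ¬ FormPattern n A B π

/-- Two orderings are equivalent if one is obtained from the other by cyclic
shifts, or by reversing the order and then applying cyclic shifts. -/
def EquivOrderings {α : Type*} (π₁ π₂ : List α) : Prop :=
  (∃ m, π₂ = π₁.rotate m) ∨ (∃ m, π₂ = π₁.reverse.rotate m)

section Aux
variable {α : Type*} {A B : Set α}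

def Alt (A B : Set α) (w : List α) : Prop :=
  ∀ (i : ℕ) (h : i < w.length),
      (i % 2 = 0 → w[i]'h ∈ A \ B) ∧ (i % 2 = 1 → w[i]'h ∈ B \ A)

lemma alt_append_even {w1 w2 : List α} (h : Alt A B (w1 ++ w2))
    (h1 : w1.length % 2 = 0) (h2 : w2.length % 2 = 0) : Alt A B (w2 ++ w1) := by
  intro i hi
  have hi' : i < w2.length + w1.length := by simpa using hi
  by_cases hc : i < w2.length
  · have hj : w1.length + i < (w1 ++ w2).length := by simp; omega
    have e : (w2 ++ w1)[i]'hi = (w1 ++ w2)[w1.length + i]'hj := by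
      rw [List.getElem_append_left hc, List.getElem_append_right (by omega)]
      congr 1; omega
    have := h (w1.length + i) hj
    rw [e]
    constructor
    · intro hp; exact this.1 (by omega)
    · intro hp; exact this.2 (by omega)
  · have hj : i - w2.length < (w1 ++ w2).length := by simp; omega
    have e : (w2 ++ w1)[i]'hi = (w1 ++ w2)[i - w2.length]'hj := by
      rw [List.getElem_append_right (by omega),
        List.getElem_append_left (by simp at hi ⊢; omega)]
    have := h (i - w2.length) hj
    rw [e]
    constructor
    · intro hp; exact this.1 (by omega)
    · intro hp; exact this.2 (by omega)

lemma alt_append_odd {w1 w2 : List α} (h : Alt A B (w1 ++ w2))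
    (h1 : w1.length % 2 = 1) (h2 : w2.length % 2 = 1) : Alt B A (w2 ++ w1) := by
  intro i hi
  have hi' : i < w2.length + w1.length := by simpa using hi
  by_cases hc : i < w2.length
  · have hj : w1.length + i < (w1 ++ w2).length := by simp; omega
    have e : (w2 ++ w1)[i]'hi = (w1 ++ w2)[w1.length + i]'hj := by
      rw [List.getElem_append_left hc, List.getElem_append_right (by omega)]
      congr 1; omega
    have := h (w1.length + i) hj
    rw [e]
    constructor
    · intro hp; exact this.2 (by omega)
    · intro hp; exact this.1 (by omega)
  · have hj : i - w2.length < (w1 ++ w2).length := by simp; omega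
    have e : (w2 ++ w1)[i]'hi = (w1 ++ w2)[i - w2.length]'hj := by
      rw [List.getElem_append_right (by omega),
        List.getElem_append_left (by simp at hi ⊢; omega)]
    have := h (i - w2.length) hj
    rw [e]
    constructor
    · intro hp; exact this.2 (by omega)
    · intro hp; exact this.1 (by omega)

lemma alt_reverse {w : List α} (h : Alt A B w) (hw : w.length % 2 = 0) :
    Alt B A w.reverse := by
  intro i hi
  have hi' : i < w.length := by simpa using hi
  rw [List.getElem_reverse]
  have hj : w.length - 1 - i < w.length := by omega
  have := h (w.length - 1 - i) hj
  constructor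
  · intro hp; exact this.2 (by omega)
  · intro hp; exact this.1 (by omega)

lemma formPattern_rotate {n : ℕ} {π : List α} {m : ℕ} (hn : n % 2 = 0)
    (h : FormPattern n A B (π.rotate m)) :
    FormPattern n A B π ∨ FormPattern n B A π := by
  obtain ⟨w, hsub, hlen, halt⟩ := h
  set m' := m % (π.length + 0) with hm'  -- dummy
  have hrm : π.rotate (m % π.length) = π.rotate m := List.rotate_mod π m
  by_cases hπ : π = []
  · subst hπ; simp [List.rotate] at hsub
    left; exact ⟨w, by simp [hsub], hlen, halt⟩
  have hlpos : 0 < π.length := List.length_pos_iff.mpr hπ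
  have hle : m % π.length ≤ π.length := le_of_lt (Nat.mod_lt _ hlpos)
  have hrot : π.rotate m = π.drop (m % π.length) ++ π.take (m % π.length) := by
    rw [← hrm, List.rotate_eq_drop_append_take hle]
  rw [hrot] at hsub
  obtain ⟨w1, w2, hw, hsub1, hsub2⟩ := List.sublist_append_iff.mp hsub
  subst hw
  have hπeq : π = π.take (m % π.length) ++ π.drop (m % π.length) := by simp
  have hsub' : (w2 ++ w1).Sublist π := by
    rw [hπeq]; exact List.Sublist.append hsub2 hsub1
  have hlen' : (w2 ++ w1).length = n := by simp at hlen ⊢; omega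
  have hlen2 : w1.length + w2.length = n := by simpa using hlen
  rcases Nat.even_or_odd w1.length with he | ho
  · rw [Nat.even_iff] at he
    exact Or.inl ⟨w2 ++ w1, hsub', hlen',
      alt_append_even halt he (by omega)⟩
  · rw [Nat.odd_iff] at ho
    exact Or.inr ⟨w2 ++ w1, hsub', hlen',
      alt_append_odd halt ho (by omega)⟩

lemma formPattern_reverse {n : ℕ} {π : List α} (hn : n % 2 = 0)
    (h : FormPattern n A B π.reverse) : FormPattern n B A π := by
  obtain ⟨w, hsub, hlen, halt⟩ := h
  refine ⟨w.reverse, ?_, by simpa using hlen, alt_reverse halt (by omega)⟩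
  have : w.reverse.Sublist π.reverse.reverse := List.reverse_sublist.mpr hsub
  simpa using this

lemma freeOrdering_rotate {n : ℕ} {E : Set (Set α)} {π : List α} (m : ℕ)
    (hn : n % 2 = 0) (h : FreeOrdering n E π) : FreeOrdering n E (π.rotate m) := by
  intro A hA B hB hp
  rcases formPattern_rotate hn hp with hp' | hp'
  · exact h A hA B hB hp'
  · exact h B hB A hA hp'

lemma freeOrdering_reverse {n : ℕ} {E : Set (Set α)} {π : List α}
    (hn : n % 2 = 0) (h : FreeOrdering n E π) : FreeOrdering n E π.reverse := by
  intro A hA B hB hp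
  exact h B hB A hA (formPattern_reverse hn hp)

lemma exists_rotate_inv (π : List α) (m : ℕ) : ∃ j, (π.rotate m).rotate j = π := by
  by_cases hπ : π = []
  · exact ⟨0, by simp [hπ]⟩
  have hl : 1 ≤ π.length := List.length_pos_iff.mpr hπ
  refine ⟨π.length * (m + 1) - m, ?_⟩
  have hle : m ≤ π.length * (m + 1) := by
    calc m ≤ m + 1 := Nat.le_succ m
    _ ≤ π.length * (m + 1) := Nat.le_mul_of_pos_left _ hl
  rw [List.rotate_rotate]
  have : m + (π.length * (m + 1) - m) = π.length * (m + 1) := by omega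
  rw [this, List.rotate_length_mul]

end Aux

/-- **Observation (cyclic shifts).** If `π₁` and `π₂` are equivalent orderings
of the vertex set of a hypergraph, then `π₁` is an `(AB)^k`-free ordering if
and only if `π₂` is an `(AB)^k`-free ordering. -/
theorem equiv_orderings_ABk_free_iff {V : Type*} [Fintype V] (E : Set (Set V))
    (k : ℕ) (hk : 0 < k) (π₁ π₂ : List V)
    (hπ₁ : IsOrderingOf Set.univ π₁) (hequiv : EquivOrderings π₁ π₂) :
    FreeOrdering (2 * k) E π₁ ↔ FreeOrdering (2 * k) E π₂ := by
  have hn : (2 * k) % 2 = 0 := by omega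
  have rot_iff : ∀ (π : List V) (m : ℕ),
      FreeOrdering (2 * k) E π ↔ FreeOrdering (2 * k) E (π.rotate m) := by
    intro π m
    constructor
    · exact freeOrdering_rotate m hn
    · intro h
      obtain ⟨j, hj⟩ := exists_rotate_inv π m
      have := freeOrdering_rotate j hn h
      rwa [hj] at this
  have rev_iff : ∀ (π : List V),
      FreeOrdering (2 * k) E π ↔ FreeOrdering (2 * k) E π.reverse := by
    intro π
    constructor
    · exact freeOrdering_reverse hn
    · intro h
      have := freeOrdering_reverse hn h
      rwa [List.reverse_reverse] at this
  rcases hequiv with ⟨m, rfl⟩ | ⟨m, rfl⟩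
  · exact rot_iff π₁ m
  · exact (rev_iff π₁).trans (rot_iff π₁.reverse m)
end

section
/- Let V = {1, 2, …, N} with N ≥ 4 and let E be the set of all circular intervals of {1, …, N}. Then a linear ordering π of V is an ABAB-free ordering of the hypergraph H = (V, E) if and only if π is equivalent to the increasing order 1, 2, …, N (i.e., obtainable from it by cyclic shifts, or by reversal followed by cyclic shifts). -/
/-- `S` is a circular interval of `{1, …, N}`: a set of consecutive integers,
or the union of two intervals, one containing `1` and the other containing `N`. -/
def IsCircularInterval (N : ℕ) (S : Set ℕ) : Prop :=
  S ⊆ Set.Icc 1 N ∧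
    ((∃ a b, S = Set.Icc a b) ∨ (∃ a b, S = Set.Icc 1 a ∪ Set.Icc b N))

/-! Two circular intervals `A`, `B` cannot alternate along `1 < ⋯ < N`: if `a < b < c < d` with
`a, c ∈ A \ B` and `b, d ∈ B \ A`, neither set is an ordinary interval, and two wrap-around
intervals cannot interleave. ABAB-freeness is invariant under rotation and reversal, so every
ordering equivalent to `1, …, N` is free. Conversely, `{v, v + 1}` and its complement are circular
intervals, so in a free ordering `v` and `v + 1` are cyclically adjacent; after rotating, and
possibly reversing, the ordering starts with `1, 2`, and adjacency then forces `1, 2, …, N`. -/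

open List Set

lemma formPattern_four_iff {α : Type*} {A B : Set α} {π : List α} :
    FormPattern 4 A B π ↔
      ∃ a b c d, [a, b, c, d] <+ π ∧ a ∈ A \ B ∧ b ∈ B \ A ∧ c ∈ A \ B ∧ d ∈ B \ A := by
  constructor
  · rintro ⟨w, hsub, hlen, hw⟩
    match w, hlen with
    | [a, b, c, d], _ =>
      exact ⟨a, b, c, d, hsub, (hw 0 (by simp)).1 rfl, (hw 1 (by simp)).2 rfl,
        (hw 2 (by simp)).1 rfl, (hw 3 (by simp)).2 rfl⟩
  · rintro ⟨a, b, c, d, hsub, ha, hb, hc, hd⟩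
    refine ⟨[a, b, c, d], hsub, rfl, fun i hi => ?_⟩
    simp only [length_cons, length_nil] at hi
    interval_cases i <;> simp_all

lemma List.Sublist.exists_rotate_sublist {α : Type*} {l π : List α} {n : ℕ}
    (h : l <+ π.rotate n) : ∃ k, l.rotate k <+ π := by
  rw [rotate_eq_drop_append_take_mod, sublist_append_iff] at h
  obtain ⟨u, w, rfl, hu, hw⟩ := h
  refine ⟨u.length, ?_⟩
  rw [rotate_append_length_eq, ← take_append_drop (n % π.length) π]
  exact hw.append hu

namespace FreeOrdering

variable {α : Type*} {E : Set (Set α)} {π π' : List α}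

lemma rotate (hfree : FreeOrdering 4 E π) (n : ℕ) : FreeOrdering 4 E (π.rotate n) := by
  intro A hA B hB hpat
  obtain ⟨a, b, c, d, hsub, ha, hb, hc, hd⟩ := formPattern_four_iff.1 hpat
  obtain ⟨k, hk⟩ := hsub.exists_rotate_sublist
  rw [← rotate_mod] at hk
  obtain ⟨j, hj, hk⟩ : ∃ j < 4, [a, b, c, d].rotate j <+ π := ⟨_, Nat.mod_lt _ (by simp), hk⟩
  interval_cases j <;> simp only [rotate_zero, rotate_cons_succ, cons_append, nil_append] at hk
  · exact hfree A hA B hB (formPattern_four_iff.2 ⟨_, _, _, _, hk, ha, hb, hc, hd⟩)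
  · exact hfree B hB A hA (formPattern_four_iff.2 ⟨_, _, _, _, hk, hb, hc, hd, ha⟩)
  · exact hfree A hA B hB (formPattern_four_iff.2 ⟨_, _, _, _, hk, hc, hd, ha, hb⟩)
  · exact hfree B hB A hA (formPattern_four_iff.2 ⟨_, _, _, _, hk, hd, ha, hb, hc⟩)

lemma isRotated (hfree : FreeOrdering 4 E π) (h : π ~r π') : FreeOrdering 4 E π' := by
  obtain ⟨n, rfl⟩ := h
  exact hfree.rotate n

lemma reverse (hfree : FreeOrdering 4 E π) : FreeOrdering 4 E π.reverse := by
  intro A hA B hB hpat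
  obtain ⟨a, b, c, d, hsub, ha, hb, hc, hd⟩ := formPattern_four_iff.1 hpat
  rw [sublist_reverse_iff] at hsub
  exact hfree B hB A hA (formPattern_four_iff.2 ⟨d, c, b, a, by simpa using hsub, hd, hc, hb, ha⟩)

end FreeOrdering

lemma IsOrderingOf.perm {α : Type*} {V : Set α} {π π' : List α} (hπ : IsOrderingOf V π)
    (h : π ~ π') : IsOrderingOf V π' :=
  ⟨h.nodup_iff.1 hπ.1, fun v => h.mem_iff.symm.trans (hπ.2 v)⟩

lemma equivOrderings_iff_isRotated {α : Type*} {π₁ π₂ : List α} :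
    EquivOrderings π₁ π₂ ↔ π₁ ~r π₂ ∨ π₁.reverse ~r π₂ := by
  simp only [EquivOrderings, IsRotated, eq_comm]

lemma IsCircularInterval.compl {N : ℕ} {S : Set ℕ} (hS : IsCircularInterval N S) :
    IsCircularInterval N (Icc 1 N \ S) := by
  refine ⟨sdiff_subset, ?_⟩
  rcases hS.2 with ⟨a, b, rfl⟩ | ⟨a, b, rfl⟩
  · refine Or.inr ⟨min (a - 1) N, b + 1, ?_⟩
    ext x; simp only [mem_sdiff, mem_Icc, mem_union]; omega
  · refine Or.inl ⟨a + 1, min (b - 1) N, ?_⟩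
    ext x; simp only [mem_sdiff, mem_Icc, mem_union]; omega

lemma IsCircularInterval.not_alternating {N : ℕ} {A B : Set ℕ} (hA : IsCircularInterval N A)
    (hB : IsCircularInterval N B) {a b c d : ℕ} (hab : a < b) (hbc : b < c) (hcd : c < d)
    (ha : a ∈ A \ B) (hb : b ∈ B \ A) (hc : c ∈ A \ B) (hd : d ∈ B \ A) : False := by
  have haN := hA.1 ha.1
  have hdN := hB.1 hd.1
  simp only [mem_Icc] at haN hdN
  obtain ⟨ha1, ha2⟩ := ha
  obtain ⟨hb1, hb2⟩ := hb
  obtain ⟨hc1, hc2⟩ := hc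
  obtain ⟨hd1, hd2⟩ := hd
  rcases hA.2 with ⟨p, q, rfl⟩ | ⟨p, q, rfl⟩ <;>
    rcases hB.2 with ⟨r, s, rfl⟩ | ⟨r, s, rfl⟩ <;>
      simp only [mem_Icc, mem_union] at ha1 ha2 hb1 hb2 hc1 hc2 hd1 hd2 <;> omega

lemma freeOrdering_range' (N : ℕ) :
    FreeOrdering 4 {S | IsCircularInterval N S} (range' 1 N) := by
  intro A hA B hB hpat
  obtain ⟨a, b, c, d, hsub, ha, hb, hc, hd⟩ := formPattern_four_iff.1 hpat
  have hsorted := (pairwise_lt_range' (s := 1) (n := N)).sublist hsub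
  simp only [pairwise_cons, mem_cons, forall_eq_or_imp, not_mem_nil] at hsorted
  exact hA.not_alternating hB hsorted.1.1 hsorted.2.1.1 hsorted.2.2.1.1 ha hb hc hd

lemma not_freeOrdering_of_sublist_consecutive {N v a b c d : ℕ} {σ : List ℕ}
    (hσ : IsOrderingOf (Icc 1 N) σ) (h : [a, b, c, d] <+ σ)
    (hpair : a ∈ Icc v (v + 1) ∧ c ∈ Icc v (v + 1) ∨ b ∈ Icc v (v + 1) ∧ d ∈ Icc v (v + 1)) :
    ¬ FreeOrdering 4 {S | IsCircularInterval N S} σ := by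
  intro hfree
  have hdistinct := hσ.1.sublist h
  have hmem : ∀ x ∈ [a, b, c, d], x ∈ Icc 1 N := fun x hx => (hσ.2 x).1 (h.subset hx)
  simp only [nodup_cons, mem_cons, not_mem_nil, not_or, nodup_nil] at hdistinct
  simp only [mem_cons, forall_eq_or_imp, not_mem_nil, mem_Icc] at hmem
  simp only [mem_Icc] at hpair
  -- `a ≠ c` (resp. `b ≠ d`) forces the pair to be `{v, v + 1}`, hence `1 ≤ v < N`
  have hA : IsCircularInterval N (Icc v (v + 1)) :=
    ⟨Icc_subset_Icc (by omega) (by omega), Or.inl ⟨v, v + 1, rfl⟩⟩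
  rcases hpair with hac | hbd
  · refine hfree _ hA _ hA.compl (formPattern_four_iff.2 ⟨a, b, c, d, h, ?_, ?_, ?_, ?_⟩) <;>
      simp only [mem_sdiff, mem_Icc] <;> omega
  · refine hfree _ hA.compl _ hA (formPattern_four_iff.2 ⟨a, b, c, d, h, ?_, ?_, ?_, ?_⟩) <;>
      simp only [mem_sdiff, mem_Icc] <;> omega

lemma exists_prefix_one_two_of_freeOrdering {N : ℕ} (hN : 2 ≤ N) {π : List ℕ}
    (hπ : IsOrderingOf (Icc 1 N) π) (hfree : FreeOrdering 4 {S | IsCircularInterval N S} π) :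
    ∃ σ, [1, 2] <+: σ ∧ (π ~r σ ∨ π.reverse ~r σ) := by
  obtain ⟨p, q, rfl⟩ := append_of_mem ((hπ.2 1).2 ⟨le_rfl, by omega⟩)
  have hrot : p ++ 1 :: q ~r 1 :: (q ++ p) := isRotated_append
  have h2 : 2 ∈ q ++ p := by simpa using hrot.mem_iff.1 ((hπ.2 2).2 ⟨by omega, hN⟩)
  obtain ⟨t₁, t₂, ht⟩ := append_of_mem h2
  rw [ht] at hrot
  rcases t₁ with _ | ⟨y, t₁⟩
  · exact ⟨1 :: 2 :: t₂, ⟨t₂, rfl⟩, Or.inl hrot⟩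
  rcases t₂ with _ | ⟨z, t₂⟩
  · refine ⟨1 :: 2 :: (y :: t₁).reverse, ⟨_, rfl⟩, Or.inr ?_⟩
    refine hrot.reverse.trans ?_
    simpa using isRotated_append (l := 2 :: (y :: t₁).reverse) (l' := [1])
  · exfalso
    refine not_freeOrdering_of_sublist_consecutive (hπ.perm hrot.perm) (a := 1) (b := y) (c := 2)
      (d := z) (v := 1) ?_ (Or.inl (by simp)) (hfree.isRotated hrot)
    simp

lemma range'_succ_prefix_of_freeOrdering {N k : ℕ} (hk : 2 ≤ k) (hkN : k < N) {σ : List ℕ}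
    (hσ : IsOrderingOf (Icc 1 N) σ) (hfree : FreeOrdering 4 {S | IsCircularInterval N S} σ)
    (hpre : range' 1 k <+: σ) : range' 1 (k + 1) <+: σ := by
  obtain ⟨r, rfl⟩ := hpre
  have hr : k + 1 ∈ r := by
    have := (hσ.2 (k + 1)).2 ⟨by omega, hkN⟩
    simp only [mem_append, mem_range'_1] at this
    exact this.resolve_left (by omega)
  obtain ⟨r₁, r₂, rfl⟩ := append_of_mem hr
  rcases r₁ with _ | ⟨y, r₁⟩
  · exact ⟨r₂, by simp [range'_concat, add_comm]⟩
  · refine absurd hfree (not_freeOrdering_of_sublist_consecutive hσ (a := 1) (b := k) (c := y)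
      (d := k + 1) (v := k) ?_ (Or.inr (by simp)))
    have h1k : [1, k] <+ range' 1 k := by
      obtain ⟨j, rfl⟩ : ∃ j, k = j + 1 := ⟨k - 1, by omega⟩
      rw [range'_succ]
      exact (singleton_sublist.2 (mem_range'_1.2 ⟨by omega, by omega⟩)).cons_cons 1
    exact h1k.append (by simp)

lemma eq_range'_of_freeOrdering {N : ℕ} {σ : List ℕ} (hσ : IsOrderingOf (Icc 1 N) σ)
    (hfree : FreeOrdering 4 {S | IsCircularInterval N S} σ) (h12 : [1, 2] <+: σ) :
    σ = range' 1 N := by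
  have hN : 2 ≤ N := ((hσ.2 2).1 (h12.subset (by simp))).2
  have hpre : ∀ k, 2 ≤ k → k ≤ N → range' 1 k <+: σ := by
    intro k hk hkN
    induction k, hk using Nat.le_induction with
    | base => exact h12
    | succ k hk ih => exact range'_succ_prefix_of_freeOrdering hk hkN hσ hfree (ih (by omega))
  have hperm : range' 1 N ~ σ := (perm_ext_iff_of_nodup nodup_range' hσ.1).2 fun v => by
    rw [hσ.2, mem_range'_1, mem_Icc]; omega
  exact ((hpre N hN le_rfl).eq_of_length hperm.length_eq).symm

/-- **Lemma (intervals).** Let `V = {1, …, N}` with `N ≥ 4` and let `E` be the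
set of all circular intervals of `{1, …, N}`. Then an ordering `π` of `V` is an
`ABAB`-free ordering of the hypergraph `(V, E)` if and only if `π` is
equivalent to the increasing order `1, 2, …, N`. -/
theorem circular_intervals_ABAB_free_iff (N : ℕ) (hN : 4 ≤ N) (π : List ℕ)
    (hπ : IsOrderingOf (Set.Icc 1 N) π) :
    FreeOrdering 4 {S | IsCircularInterval N S} π ↔
      EquivOrderings (List.range' 1 N) π := by
  rw [equivOrderings_iff_isRotated]
  constructor
  · intro hfree
    obtain ⟨σ, h12, hσ | hσ⟩ := exists_prefix_one_two_of_freeOrdering (by omega) hπ hfree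
    · have hσ_eq := eq_range'_of_freeOrdering (hπ.perm hσ.perm) (hfree.isRotated hσ) h12
      exact Or.inl (hσ_eq ▸ hσ.symm)
    · have hσ_eq := eq_range'_of_freeOrdering (hπ.perm ((reverse_perm π).symm.trans hσ.perm))
        (hfree.reverse.isRotated hσ) h12
      exact Or.inr (isRotated_reverse_comm_iff.2 (hσ_eq ▸ hσ.symm))
  · rintro (h | h)
    · exact (freeOrdering_range' N).isRotated h
    · exact (freeOrdering_range' N).reverse.isRotated h
end

section
/- Let V be a finite set partitioned into disjoint nonempty sets A₁, …, A_k, and let E = { ⋃_{i∈α} A_i : α a circular interval of {1, …, k} }. Then a linear ordering π of V is an ABAB-free ordering of the hypergraph (V, E) if and only if π is equivalent to an ordering that has structure A₁, …, A_k. -/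
/-- `v` comes (strictly) before `w` in the ordering `π`. -/
def Precedes {α : Type*} (π : List α) (v w : α) : Prop :=
  [v, w].Sublist π

/-- The ordering `π` has structure `A 1, A 2, …, A k`: for `i ≠ j` in
`{1, …, k}`, an element of `A i` comes before an element of `A j`
if and only if `i < j`. -/
def HasStructure {α : Type*} (k : ℕ) (A : ℕ → Set α) (π : List α) : Prop :=
  ∀ i ∈ Set.Icc 1 k, ∀ j ∈ Set.Icc 1 k, i ≠ j →
    ∀ v ∈ A i, ∀ w ∈ A j, (Precedes π v w ↔ i < j)

namespace CBAux

variable {X Y : Type*}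

def Pat (A B : Set X) (l : List X) : Prop :=
  ∃ p₁ p₂ p₃ p₄, ∃ (h₁ : p₁ < p₂) (h₂ : p₂ < p₃) (h₃ : p₃ < p₄) (h₄ : p₄ < l.length),
    l[p₁]'(by omega) ∈ A \ B ∧ l[p₂]'(by omega) ∈ B \ A ∧
    l[p₃]'(by omega) ∈ A \ B ∧ l[p₄] ∈ B \ A

lemma cons_ix_sublist (l : List X) (p : ℕ) (hp : p < l.length) (w : List X)
    (hw : w.Sublist (l.drop (p + 1))) : (l[p] :: w).Sublist l := by
  have h1 : List.Sublist (l[p] :: w) (l[p] :: l.drop (p + 1)) := hw.cons₂ _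
  rw [List.getElem_cons_drop] at h1
  exact h1.trans (List.drop_sublist _ _)

lemma pair_sublist (l : List X) (p q : ℕ) (h1 : p < q) (h2 : q < l.length) :
    ([l[p]'(by omega), l[q]]).Sublist l := by
  apply cons_ix_sublist l p (by omega)
  have hq : q - (p+1) < (l.drop (p+1)).length := by simp; omega
  have : (l.drop (p+1))[q - (p+1)] = l[q] := by
    simp only [List.getElem_drop]; congr 1; omega
  rw [← this]
  simpa using List.getElem_mem hq

lemma quad_sublist (l : List X) (p₁ p₂ p₃ p₄ : ℕ) (h₁ : p₁ < p₂) (h₂ : p₂ < p₃)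
    (h₃ : p₃ < p₄) (h₄ : p₄ < l.length) :
    List.Sublist [l[p₁]'(by omega), l[p₂]'(by omega), l[p₃]'(by omega), l[p₄]] l := by
  apply cons_ix_sublist l p₁ (by omega)
  have e2 : l[p₂]'(by omega) = (l.drop (p₁+1))[p₂ - (p₁+1)]'(by simp; omega) := by
    simp only [List.getElem_drop]; congr 1; omega
  have e3 : l[p₃]'(by omega) = (l.drop (p₁+1))[p₃ - (p₁+1)]'(by simp; omega) := by
    simp only [List.getElem_drop]; congr 1; omega
  have e4 : l[p₄] = (l.drop (p₁+1))[p₄ - (p₁+1)]'(by simp; omega) := by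
    simp only [List.getElem_drop]; congr 1; omega
  rw [e2, e3, e4]
  apply cons_ix_sublist
  have e3' : (l.drop (p₁+1))[p₃ - (p₁+1)]'(by simp only [List.length_drop]; omega)
      = ((l.drop (p₁+1)).drop (p₂ - (p₁+1) + 1))[p₃ - p₂ - 1]'(by simp only [List.length_drop]; omega) := by
    simp only [List.getElem_drop]; congr 1; omega
  have e4' : (l.drop (p₁+1))[p₄ - (p₁+1)]'(by simp only [List.length_drop]; omega)
      = ((l.drop (p₁+1)).drop (p₂ - (p₁+1) + 1))[p₄ - p₂ - 1]'(by simp only [List.length_drop]; omega) := by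
    simp only [List.getElem_drop]; congr 1; omega
  rw [e3', e4']
  exact pair_sublist _ _ _ (by omega) (by simp; omega)

lemma pat_of_formPattern {A B : Set X} {l : List X} (h : FormPattern 4 A B l) : Pat A B l := by
  obtain ⟨w, hsub, hlen, hmem⟩ := h
  rw [List.sublist_iff_exists_fin_orderEmbedding_get_eq] at hsub
  obtain ⟨f, hf⟩ := hsub
  have h0 : (0:ℕ) < w.length := by omega
  have h1 : (1:ℕ) < w.length := by omega
  have h2 : (2:ℕ) < w.length := by omega
  have h3 : (3:ℕ) < w.length := by omega
  have hlt : ∀ (a b : Fin w.length), (a:ℕ) < b → ((f a : ℕ) < (f b : ℕ)) := by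
    intro a b hab
    exact f.strictMono (by exact hab)
  have hval : ∀ (a : Fin w.length), l[(f a : ℕ)]'((f a).isLt) = w[(a : ℕ)] := by
    intro a
    have := hf a
    simpa [List.get_eq_getElem] using this.symm
  refine ⟨f ⟨0, h0⟩, f ⟨1, h1⟩, f ⟨2, h2⟩, f ⟨3, h3⟩,
    hlt _ _ (by simp), hlt _ _ (by simp), hlt _ _ (by simp), (f ⟨3, h3⟩).isLt, ?_, ?_, ?_, ?_⟩
  · rw [hval ⟨0, h0⟩]; exact (hmem 0 h0).1 rfl
  · rw [hval ⟨1, h1⟩]; exact (hmem 1 h1).2 rfl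
  · rw [hval ⟨2, h2⟩]; exact (hmem 2 h2).1 rfl
  · rw [hval ⟨3, h3⟩]; exact (hmem 3 h3).2 rfl

lemma formPattern_of_pat {A B : Set X} {l : List X} (h : Pat A B l) : FormPattern 4 A B l := by
  obtain ⟨p₁, p₂, p₃, p₄, h₁, h₂, h₃, h₄, m₁, m₂, m₃, m₄⟩ := h
  refine ⟨[l[p₁]'(by omega), l[p₂]'(by omega), l[p₃]'(by omega), l[p₄]],
    quad_sublist l p₁ p₂ p₃ p₄ h₁ h₂ h₃ h₄, rfl, ?_⟩
  intro i hi
  simp only [List.length_cons, List.length_nil] at hi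
  interval_cases i <;> refine ⟨fun hp => ?_, fun hp => ?_⟩ <;>
    first
      | exact absurd hp (by decide)
      | simpa using m₁
      | simpa using m₂
      | simpa using m₃
      | simpa using m₄


lemma modsplit (x n : ℕ) (hn : 0 < n) (hx : x < 2 * n) :
    (x % n = x ∧ x < n) ∨ (x % n = x - n ∧ n ≤ x) := by
  rcases lt_or_ge x n with h | h
  · exact Or.inl ⟨Nat.mod_eq_of_lt h, h⟩
  · refine Or.inr ⟨?_, h⟩
    rw [Nat.mod_eq_sub_mod h, Nat.mod_eq_of_lt (by omega)]

lemma pat_reverse {A B : Set X} {l : List X} (h : Pat A B l.reverse) : Pat B A l := by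
  obtain ⟨p₁, p₂, p₃, p₄, h₁, h₂, h₃, h₄, m₁, m₂, m₃, m₄⟩ := h
  rw [List.length_reverse] at h₄
  have e : ∀ p (hp : p < l.length), (l.reverse)[p]'(by simpa using hp) = l[l.length - 1 - p]'(by omega) :=
    fun p hp => List.getElem_reverse _
  rw [e p₁ (by omega)] at m₁
  rw [e p₂ (by omega)] at m₂
  rw [e p₃ (by omega)] at m₃
  rw [e p₄ (by omega)] at m₄
  exact ⟨l.length - 1 - p₄, l.length - 1 - p₃, l.length - 1 - p₂, l.length - 1 - p₁,
    by omega, by omega, by omega, by omega, m₄, m₃, m₂, m₁⟩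

lemma pat_rotate {A B : Set X} {l : List X} {m : ℕ} (h : Pat A B (l.rotate m)) :
    Pat A B l ∨ Pat B A l := by
  obtain ⟨p₁, p₂, p₃, p₄, h₁, h₂, h₃, h₄, m₁, m₂, m₃, m₄⟩ := h
  rw [List.length_rotate] at h₄
  have hn0 : 0 < l.length := by omega
  have hmn : m % l.length < l.length := Nat.mod_lt _ hn0
  have e : ∀ p (hp : p < l.length), (l.rotate m)[p]'(by simpa using hp)
      = l[(p + m) % l.length]'(Nat.mod_lt _ hn0) :=
    fun p hp => List.getElem_rotate l m p (by simpa using hp)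
  rw [e p₁ (by omega)] at m₁
  rw [e p₂ (by omega)] at m₂
  rw [e p₃ (by omega)] at m₃
  rw [e p₄ (by omega)] at m₄
  have emod : ∀ p, p < l.length → (p + m) % l.length = (p + m % l.length) % l.length := by
    intro p hp
    conv_lhs => rw [Nat.add_mod]
    conv_rhs => rw [Nat.add_mod, Nat.mod_mod]
  have hsp : ∀ p, p < l.length →
      ((p + m) % l.length = p + m % l.length ∧ p + m % l.length < l.length) ∨
      ((p + m) % l.length = p + m % l.length - l.length ∧ l.length ≤ p + m % l.length) := by
    intro p hp
    rw [emod p hp]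
    exact modsplit _ _ hn0 (by omega)
  rcases hsp p₁ (by omega) with ⟨e1, b1⟩ | ⟨e1, b1⟩ <;>
    rcases hsp p₂ (by omega) with ⟨e2, b2⟩ | ⟨e2, b2⟩ <;>
    rcases hsp p₃ (by omega) with ⟨e3, b3⟩ | ⟨e3, b3⟩ <;>
    rcases hsp p₄ (by omega) with ⟨e4, b4⟩ | ⟨e4, b4⟩ <;>
    first
      | exact Or.inl ⟨(p₁ + m) % l.length, (p₂ + m) % l.length, (p₃ + m) % l.length,
          (p₄ + m) % l.length, by omega, by omega, by omega, Nat.mod_lt _ hn0, m₁, m₂, m₃, m₄⟩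
      | exact Or.inr ⟨(p₄ + m) % l.length, (p₁ + m) % l.length, (p₂ + m) % l.length,
          (p₃ + m) % l.length, by omega, by omega, by omega, Nat.mod_lt _ hn0, m₄, m₁, m₂, m₃⟩
      | exact Or.inl ⟨(p₃ + m) % l.length, (p₄ + m) % l.length, (p₁ + m) % l.length,
          (p₂ + m) % l.length, by omega, by omega, by omega, Nat.mod_lt _ hn0, m₃, m₄, m₁, m₂⟩
      | exact Or.inr ⟨(p₂ + m) % l.length, (p₃ + m) % l.length, (p₄ + m) % l.length,
          (p₁ + m) % l.length, by omega, by omega, by omega, Nat.mod_lt _ hn0, m₂, m₃, m₄, m₁⟩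
      | omega

def SortedIdx (l : List ℕ) : Prop :=
  ∀ p q (hp : p < l.length) (hq : q < l.length), p < q → l[p] ≤ l[q]

lemma circ_Icc {k a b : ℕ} (ha : 1 ≤ a) (hb : b ≤ k) : IsCircularInterval k (Set.Icc a b) := by
  refine ⟨fun x hx => ?_, Or.inl ⟨a, b, rfl⟩⟩
  simp only [Set.mem_Icc] at hx ⊢
  omega

lemma circ_wrap {k a b : ℕ} (ha : a ≤ k) (hb : 1 ≤ b) :
    IsCircularInterval k (Set.Icc 1 a ∪ Set.Icc b k) := by
  refine ⟨fun x hx => ?_, Or.inr ⟨a, b, rfl⟩⟩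
  simp only [Set.mem_Icc, Set.mem_union] at hx ⊢
  omega

lemma sorted_not_pat {k : ℕ} {L : List ℕ} (h1 : ∀ p (hp : p < L.length), L[p] ∈ Set.Icc 1 k)
    (hs : SortedIdx L) {α β : Set ℕ} (hα : IsCircularInterval k α)
    (hβ : IsCircularInterval k β) : ¬ Pat α β L := by
  rintro ⟨p₁, p₂, p₃, p₄, h₁, h₂, h₃, h₄, m₁, m₂, m₃, m₄⟩
  have r₁ := h1 p₁ (by omega)
  have r₂ := h1 p₂ (by omega)
  have r₃ := h1 p₃ (by omega)
  have r₄ := h1 p₄ (by omega)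
  have o₁ : L[p₁]'(by omega) ≤ L[p₂]'(by omega) := hs _ _ (by omega) (by omega) h₁
  have o₂ : L[p₂]'(by omega) ≤ L[p₃]'(by omega) := hs _ _ (by omega) (by omega) h₂
  have o₃ : L[p₃]'(by omega) ≤ L[p₄]'(by omega) := hs _ _ (by omega) h₄ h₃
  obtain ⟨hαs, hαf⟩ := hα
  obtain ⟨hβs, hβf⟩ := hβ
  rcases hαf with ⟨a, b, rfl⟩ | ⟨a, b, rfl⟩ <;> rcases hβf with ⟨c, d, rfl⟩ | ⟨c, d, rfl⟩ <;>
    simp only [Set.mem_Icc, Set.mem_union, Set.mem_diff, not_or, not_and, not_le,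
      Set.mem_setOf_eq] at m₁ m₂ m₃ m₄ r₁ r₂ r₃ r₄ <;>
    omega

lemma step1 {k : ℕ} {L : List ℕ} (hkL : k ∈ L)
    (P1 : ∀ p₁ p₂ p₃ p₄ (h₁ : p₁ < p₂) (h₂ : p₂ < p₃) (h₃ : p₃ < p₄) (h₄ : p₄ < L.length),
      L[p₁]'(by omega) = k → L[p₂]'(by omega) ≠ k → L[p₃]'(by omega) = k → L[p₄] ≠ k → False)
    (P2 : ∀ p₁ p₂ p₃ p₄ (h₁ : p₁ < p₂) (h₂ : p₂ < p₃) (h₃ : p₃ < p₄) (h₄ : p₄ < L.length),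
      L[p₁]'(by omega) ≠ k → L[p₂]'(by omega) = k → L[p₃]'(by omega) ≠ k → L[p₄] = k → False) :
    ∃ m₀ d, d < L.length ∧
      ∀ q (hq : q < (L.rotate m₀).length), ((L.rotate m₀)[q] = k ↔ d ≤ q) := by
  obtain ⟨f0, hf0lt, hf0⟩ := List.getElem_of_mem hkL
  have hn0 : 0 < L.length := by omega
  have hexP : ∃ p, L[p]? = some k := ⟨f0, List.getElem?_eq_some_iff.mpr ⟨hf0lt, hf0⟩⟩
  obtain ⟨f, hfspec, hfmin0⟩ : ∃ f, L[f]? = some k ∧ ∀ t, t < f → L[t]? ≠ some k :=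
    ⟨Nat.find hexP, Nat.find_spec hexP, fun t ht => Nat.find_min hexP ht⟩
  obtain ⟨hflt, hfval⟩ := List.getElem?_eq_some_iff.mp hfspec
  have hfmin : ∀ t (ht : t < L.length), t < f → L[t] ≠ k := fun t ht h hv =>
    hfmin0 t h (List.getElem?_eq_some_iff.mpr ⟨ht, hv⟩)
  obtain ⟨g, hgspec, hgmax0⟩ :
      ∃ g, L[g]? = some k ∧ ∀ t, g < t → t ≤ L.length - 1 → L[t]? ≠ some k :=
    ⟨Nat.findGreatest (fun p => L[p]? = some k) (L.length - 1),
      Nat.findGreatest_spec (P := fun p => L[p]? = some k) (m := f) (n := L.length - 1) (by omega) hfspec,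
      fun t h h' => Nat.findGreatest_is_greatest h h'⟩
  obtain ⟨hglt, hgval⟩ := List.getElem?_eq_some_iff.mp hgspec
  have hgmax : ∀ t (ht : t < L.length), g < t → L[t] ≠ k := fun t ht h hv =>
    hgmax0 t h (by omega) (List.getElem?_eq_some_iff.mpr ⟨ht, hv⟩)
  have hfg : f ≤ g := by
    by_contra h
    exact hfmin0 g (by omega) hgspec
  by_cases hA : ∀ t, f ≤ t → t ≤ g → L[t]? = some k
  · have hAval : ∀ t (ht : t < L.length), f ≤ t → t ≤ g → L[t] = k := by
      intro t ht h1 h2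
      obtain ⟨_, hv⟩ := List.getElem?_eq_some_iff.mp (hA t h1 h2)
      exact hv
    have key : ∀ t (ht : t < L.length), (L[t] = k ↔ (f ≤ t ∧ t ≤ g)) := by
      intro t ht
      constructor
      · intro hv
        constructor
        · by_contra h; exact hfmin t ht (by omega) hv
        · by_contra h; exact hgmax t ht (by omega) hv
      · exact fun h => hAval t ht h.1 h.2
    refine ⟨g + 1, L.length - g - 1 + f, by omega, ?_⟩
    intro q hq
    rw [List.length_rotate] at hq
    rw [List.getElem_rotate]
    have hkey := key ((q + (g + 1)) % L.length) (Nat.mod_lt _ hn0)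
    rcases modsplit (q + (g + 1)) L.length hn0 (by omega) with ⟨e, b⟩ | ⟨e, b⟩ <;>
      exact ⟨fun hv => by have h2 := hkey.mp hv; omega, fun h' => hkey.mpr (by omega)⟩
  · push_neg at hA
    obtain ⟨t₀, hft₀, ht₀g, ht₀⟩ := hA
    have ht₀lt : t₀ < L.length := by omega
    have ht₀val : L[t₀] ≠ k := fun hv => ht₀ (List.getElem?_eq_some_iff.mpr ⟨ht₀lt, hv⟩)
    have ht₀f : f < t₀ := lt_of_le_of_ne hft₀ (fun h => ht₀val (h ▸ hfval))
    have ht₀g' : t₀ < g := lt_of_le_of_ne ht₀g (fun h => ht₀val (h ▸ hgval))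
    have hf0' : f = 0 := by
      by_contra h
      exact P2 (f - 1) f t₀ g (by omega) ht₀f ht₀g' hglt
        (hfmin (f - 1) (by omega) (by omega)) hfval ht₀val hgval
    have hg' : g = L.length - 1 := by
      by_contra h
      exact P1 f t₀ g (g + 1) ht₀f ht₀g' (by omega) (by omega)
        hfval ht₀val hgval (hgmax (g + 1) (by omega) (by omega))
    have hexQ : ∃ p, p < L.length ∧ ¬ (L[p]? = some k) := ⟨t₀, ht₀lt, ht₀⟩
    obtain ⟨e, ⟨helt, heval'⟩, hemin0⟩ :
        ∃ e, (e < L.length ∧ ¬ (L[e]? = some k)) ∧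
          ∀ t, t < e → ¬ (t < L.length ∧ ¬ (L[t]? = some k)) :=
      ⟨Nat.find hexQ, Nat.find_spec hexQ, fun t ht => Nat.find_min hexQ ht⟩
    have heval : L[e] ≠ k := fun hv => heval' (List.getElem?_eq_some_iff.mpr ⟨helt, hv⟩)
    have hemin : ∀ t (ht : t < L.length), t < e → L[t] = k := by
      intro t ht h
      have := hemin0 t h
      simp only [not_and, not_not] at this
      obtain ⟨_, hv⟩ := List.getElem?_eq_some_iff.mp (this ht)
      exact hv
    obtain ⟨s', hs'spec, hs'le, hs'max0⟩ :
        ∃ s', ¬ (L[s']? = some k) ∧ s' ≤ L.length - 1 ∧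
          ∀ t, s' < t → t ≤ L.length - 1 → ¬ ¬ (L[t]? = some k) :=
      ⟨Nat.findGreatest (fun p => ¬ (L[p]? = some k)) (L.length - 1),
        Nat.findGreatest_spec (P := fun p => ¬ (L[p]? = some k)) (m := t₀) (n := L.length - 1) (by omega) ht₀,
        Nat.findGreatest_le _,
        fun t h h' => Nat.findGreatest_is_greatest h h'⟩
    have hs'lt : s' < L.length := by omega
    have hs'val : L[s'] ≠ k := fun hv => hs'spec (List.getElem?_eq_some_iff.mpr ⟨hs'lt, hv⟩)
    have hs'max : ∀ t (ht : t < L.length), s' < t → L[t] = k := by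
      intro t ht h
      have := hs'max0 t h (by omega)
      simp only [not_not] at this
      obtain ⟨_, hv⟩ := List.getElem?_eq_some_iff.mp this
      exact hv
    have hes : e ≤ s' := by
      by_contra h
      exact (hs'max0 e (by omega) (by omega)) heval'
    have he1 : 1 ≤ e := by
      rcases Nat.eq_zero_or_pos e with h | h
      · exfalso; apply heval; simp only [h]; simp only [hf0'] at hfval; exact hfval
      · exact h
    have hs'2 : s' ≤ L.length - 2 := by
      have : s' ≠ L.length - 1 := by
        intro h
        apply hs'val
        simp only [h, ← hg']
        exact hgval
      omega
    have hmid : ∀ p (hp : p < L.length), e ≤ p → p ≤ s' → L[p] ≠ k := by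
      intro p hp hpe hps hv
      have h1 : e < p := lt_of_le_of_ne hpe (fun h => heval (h ▸ hv))
      have h2 : p < s' := lt_of_le_of_ne hps (fun h => hs'val (h ▸ hv))
      have hlast : L[L.length - 1]'(by omega) = k := by simp only [← hg']; exact hgval
      exact P2 e p s' (L.length - 1) h1 h2 (by omega) (by omega) heval hv hs'val hlast
    have key : ∀ t (ht : t < L.length), (L[t] = k ↔ (t < e ∨ s' < t)) := by
      intro t ht
      constructor
      · intro hv
        by_contra h
        push_neg at h
        exact hmid t ht h.1 h.2 hv
      · rintro (h | h)
        · exact hemin t ht h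
        · exact hs'max t ht h
    refine ⟨e, s' + 1 - e, by omega, ?_⟩
    intro q hq
    rw [List.length_rotate] at hq
    rw [List.getElem_rotate]
    have hkey := key ((q + e) % L.length) (Nat.mod_lt _ hn0)
    rcases modsplit (q + e) L.length hn0 (by omega) with ⟨he', b⟩ | ⟨he', b⟩ <;>
      exact ⟨fun hv => by have h2 := hkey.mp hv; omega, fun h' => hkey.mpr (by omega)⟩

lemma step2 (k d : ℕ) (hk1 : 1 ≤ k) (M : List ℕ)
    (h1 : ∀ p (hp : p < M.length), M[p] ∈ Set.Icc 1 k)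
    (h2 : ∀ i, i ∈ Set.Icc 1 k → i ∈ M)
    (hd : d < M.length)
    (hiff : ∀ q (hq : q < M.length), (M[q] = k ↔ d ≤ q))
    (hfree : ∀ A B : Set ℕ, IsCircularInterval k A → IsCircularInterval k B → ¬ Pat A B M) :
    SortedIdx M ∨
      (∀ p q (hp : p < M.length) (hq : q < M.length), p < q → q < d → M[q] ≤ M[p]) := by
  classical
  have hlast : ∀ q (hq : q < M.length), d ≤ q → M[q] = k := fun q hq h => (hiff q hq).mpr h
  have hpref : ∀ q (hq : q < M.length), q < d → M[q] ≠ k := by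
    intro q hq h hv
    have := (hiff q hq).mp hv
    omega
  obtain ⟨fa, hfale, hfamin, hfaspec0⟩ :
      ∃ fa : ℕ → ℕ, (∀ j p (hp : p < M.length), M[p] = j → fa j ≤ p) ∧
        (∀ j t (ht : t < M.length), t < fa j → M[t] ≠ j) ∧
        (∀ j, j ∈ M → ∃ h : fa j < M.length, M[fa j] = j) := by
    refine ⟨fun j => sInf {p | M[p]? = some j}, ?_, ?_, ?_⟩
    · intro j p hp hv
      exact Nat.sInf_le (by simp only [Set.mem_setOf_eq, List.getElem?_eq_some_iff]; exact ⟨hp, hv⟩)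
    · intro j t ht hlt hv
      exact Nat.notMem_of_lt_sInf hlt
        (by simp only [Set.mem_setOf_eq, List.getElem?_eq_some_iff]; exact ⟨ht, hv⟩)
    · intro j hjmem
      obtain ⟨pj, hpjlt, hpjval⟩ := List.getElem_of_mem hjmem
      have hne : {p | M[p]? = some j}.Nonempty :=
        ⟨pj, by simp only [Set.mem_setOf_eq, List.getElem?_eq_some_iff]; exact ⟨hpjlt, hpjval⟩⟩
      have hmem : sInf {p | M[p]? = some j} ∈ {p | M[p]? = some j} := Nat.sInf_mem hne
      rw [Set.mem_setOf_eq] at hmem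
      exact List.getElem?_eq_some_iff.mp hmem
  obtain ⟨ga, hgage, hgamax, hgaspec0⟩ :
      ∃ ga : ℕ → ℕ, (∀ j p (hp : p < M.length), M[p] = j → p ≤ ga j) ∧
        (∀ j t (ht : t < M.length), ga j < t → M[t] ≠ j) ∧
        (∀ j, j ∈ M → ∃ h : ga j < M.length, M[ga j] = j) := by
    refine ⟨fun j => Nat.findGreatest (fun p => M[p]? = some j) (M.length - 1), ?_, ?_, ?_⟩
    · intro j p hp hv
      exact Nat.le_findGreatest (by omega) (by simp only [List.getElem?_eq_some_iff]; exact ⟨hp, hv⟩)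
    · intro j t ht hlt hv
      exact Nat.findGreatest_is_greatest hlt (by omega)
        (by simp only [List.getElem?_eq_some_iff]; exact ⟨ht, hv⟩)
    · intro j hjmem
      obtain ⟨pj, hpjlt, hpjval⟩ := List.getElem_of_mem hjmem
      have hspec : M[Nat.findGreatest (fun p => M[p]? = some j) (M.length - 1)]? = some j :=
        Nat.findGreatest_spec (P := fun p => M[p]? = some j) (m := pj) (n := M.length - 1)
          (by omega) (List.getElem?_eq_some_iff.mpr ⟨hpjlt, hpjval⟩)
      exact List.getElem?_eq_some_iff.mp hspec
  have hfaspec : ∀ j, 1 ≤ j → j ≤ k - 1 → ∃ h : fa j < M.length, M[fa j] = j ∧ fa j < d := by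
    intro j hj1 hjk
    obtain ⟨hlt, hval⟩ := hfaspec0 j (h2 j (by simp only [Set.mem_Icc]; omega))
    refine ⟨hlt, hval, ?_⟩
    by_contra h
    have := hlast (fa j) hlt (by omega)
    omega
  have hgaspec : ∀ j, 1 ≤ j → j ≤ k - 1 → ∃ h : ga j < M.length, M[ga j] = j ∧ ga j < d := by
    intro j hj1 hjk
    obtain ⟨hlt, hval⟩ := hgaspec0 j (h2 j (by simp only [Set.mem_Icc]; omega))
    refine ⟨hlt, hval, ?_⟩
    by_contra h
    have := hlast (ga j) hlt (by omega)
    omega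
  have hfaga : ∀ j, 1 ≤ j → j ≤ k - 1 → fa j ≤ ga j := by
    intro j hj1 hjk
    obtain ⟨hflt, hfval, _⟩ := hfaspec j hj1 hjk
    exact hgage j (fa j) hflt hfval
  -- blocks are intervals
  have hblock : ∀ j, 1 ≤ j → j ≤ k - 1 → ∀ p (hp : p < M.length), fa j ≤ p → p ≤ ga j →
      M[p] = j := by
    intro j hj1 hjk p hp hfp hpg
    obtain ⟨hflt, hfval, hfd⟩ := hfaspec j hj1 hjk
    obtain ⟨hglt, hgval, hgd⟩ := hgaspec j hj1 hjk
    rcases eq_or_lt_of_le hfp with h | h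
    · simp only [← h]; exact hfval
    rcases eq_or_lt_of_le hpg with h' | h'
    · simp only [h']; exact hgval
    by_contra hv
    have rp := h1 p hp
    simp only [Set.mem_Icc] at rp
    have hlk : M[M.length - 1]'(by omega) = k := hlast _ (by omega) (by omega)
    refine hfree (Set.Icc j j) (Set.Icc 1 (j-1) ∪ Set.Icc (j+1) k) (circ_Icc (by omega) (by omega))
      (circ_wrap (by omega) (by omega))
      ⟨fa j, p, ga j, M.length - 1, h, h', by omega, by omega, ?_, ?_, ?_, ?_⟩ <;>
      simp only [Set.mem_diff, Set.mem_Icc, Set.mem_union, not_or, not_and, not_le] <;>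
      omega
  have hpair : ∀ j, 1 ≤ j → j + 2 ≤ k → ∀ p q r (hp : p < M.length) (hq : q < M.length)
      (hr : r < M.length), p < q → q < r → r < d →
      (M[p] = j ∨ M[p] = j + 1) → (M[r] = j ∨ M[r] = j + 1) →
      (M[q] = j ∨ M[q] = j + 1) := by
    intro j hj1 hjk p q r hp hq hr hpq hqr hrd hvp hvr
    by_contra hvq
    push_neg at hvq
    have rq := h1 q hq
    simp only [Set.mem_Icc] at rq
    have hlk : M[M.length - 1]'(by omega) = k := hlast _ (by omega) (by omega)
    refine hfree (Set.Icc j (j+1)) (Set.Icc 1 (j-1) ∪ Set.Icc (j+2) k)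
      (circ_Icc (by omega) (by omega)) (circ_wrap (by omega) (by omega))
      ⟨p, q, r, M.length - 1, hpq, hqr, by omega, by omega, ?_, ?_, ?_, ?_⟩ <;>
      simp only [Set.mem_diff, Set.mem_Icc, Set.mem_union, not_or, not_and, not_le] <;>
      omega
  -- adjacency of consecutive blocks
  have hadj : ∀ u v, 1 ≤ u → 1 ≤ v → u ≤ k - 1 → v ≤ k - 1 → (v = u + 1 ∨ u = v + 1) →
      fa u < fa v → ga u + 1 = fa v := by
    intro u v hu1 hv1 huk hvk huv hlt
    obtain ⟨hfult, hfuval, hfud⟩ := hfaspec u hu1 huk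
    obtain ⟨hgult, hguval, hgud⟩ := hgaspec u hu1 huk
    obtain ⟨hfvlt, hfvval, hfvd⟩ := hfaspec v hv1 hvk
    have huv' : u ≠ v := by omega
    have h1' : ga u < fa v := by
      by_contra h
      push_neg at h
      have := hblock u hu1 huk (fa v) hfvlt (by omega) h
      omega
    by_contra hne
    have h2' : ga u + 1 < fa v := by omega
    have htlt : ga u + 1 < M.length := by omega
    have ht1 : M[ga u + 1] ≠ u := hgamax u (ga u + 1) htlt (by omega)
    have ht2 : M[ga u + 1] ≠ v := hfamin v (ga u + 1) htlt (by omega)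
    rcases huv with rfl | rfl
    · have := hpair u hu1 (by omega) (ga u) (ga u + 1) (fa (u+1)) hgult htlt hfvlt
        (by omega) h2' hfvd (Or.inl hguval) (Or.inr hfvval)
      omega
    · have := hpair v hv1 (by omega) (ga (v+1)) (ga (v+1) + 1) (fa v) hgult htlt hfvlt
        (by omega) h2' hfvd (Or.inr hguval) (Or.inl hfvval)
      omega
  -- dichotomy: ascending or descending
  have hdich : (∀ j, 1 ≤ j → j + 2 ≤ k → ga j + 1 = fa (j+1)) ∨
      (∀ j, 1 ≤ j → j + 2 ≤ k → ga (j+1) + 1 = fa j) := by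
    by_cases hk3 : k ≤ 2
    · left; intro j hj1 hj2; omega
    · have hstep : ∀ j, 1 ≤ j → j + 2 ≤ k → fa j ≠ fa (j+1) := by
        intro j hj1 hj2 h
        obtain ⟨ha', hva, _⟩ := hfaspec j hj1 (by omega)
        obtain ⟨hb', hvb, _⟩ := hfaspec (j+1) (by omega) (by omega)
        simp only [h] at hva
        omega
      rcases lt_or_gt_of_ne (hstep 1 le_rfl (by omega)) with h | h
      · left
        intro j hj1
        induction j, hj1 using Nat.le_induction with
        | base =>
          intro h2'
          exact hadj 1 2 le_rfl (by omega) (by omega) (by omega) (Or.inl rfl) h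
        | succ n hn ih =>
          intro h2'
          have hasc_n : ga n + 1 = fa (n+1) := ih (by omega)
          rcases lt_or_gt_of_ne (hstep (n+1) (by omega) (by omega)) with h' | h'
          · exact hadj (n+1) (n+2) (by omega) (by omega) (by omega) (by omega) (Or.inl rfl) h'
          · exfalso
            have hdesc : ga (n+2) + 1 = fa (n+1) :=
              hadj (n+2) (n+1) (by omega) (by omega) (by omega) (by omega) (Or.inr rfl) h'
            have heq : ga (n+2) = ga n := by omega
            obtain ⟨ha', hva, _⟩ := hgaspec n (by omega) (by omega)
            obtain ⟨hb', hvb, _⟩ := hgaspec (n+2) (by omega) (by omega)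
            simp only [heq] at hvb
            omega
      · right
        intro j hj1
        induction j, hj1 using Nat.le_induction with
        | base =>
          intro h2'
          exact hadj 2 1 (by omega) le_rfl (by omega) (by omega) (Or.inr rfl) h
        | succ n hn ih =>
          intro h2'
          have hdesc_n : ga (n+1) + 1 = fa n := ih (by omega)
          rcases lt_or_gt_of_ne (hstep (n+1) (by omega) (by omega)) with h' | h'
          · exfalso
            have hasc : ga (n+1) + 1 = fa (n+2) :=
              hadj (n+1) (n+2) (by omega) (by omega) (by omega) (by omega) (Or.inl rfl) h'
            have heq : fa (n+2) = fa n := by omega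
            obtain ⟨ha', hva, _⟩ := hfaspec n (by omega) (by omega)
            obtain ⟨hb', hvb, _⟩ := hfaspec (n+2) (by omega) (by omega)
            simp only [heq] at hvb
            omega
          · exact hadj (n+2) (n+1) (by omega) (by omega) (by omega) (by omega) (Or.inr rfl) h'
  rcases hdich with hasc | hdesc
  · -- ascending: M is sorted
    left
    have hfmono : ∀ a b, 1 ≤ a → a < b → b ≤ k - 1 → fa a < fa b := by
      intro a b ha1 hab
      induction b, hab using Nat.le_induction with
      | base =>
        intro hbk
        show fa a < fa (a + 1)
        have := hasc a ha1 (by omega)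
        have := hfaga a ha1 (by omega)
        omega
      | succ n hn ih =>
        intro hbk
        have h1' : fa a < fa n := ih (by omega)
        have := hasc n (by omega) (by omega)
        have := hfaga n (by omega) (by omega)
        omega
    intro p q hp hq hpq
    by_cases hdq : d ≤ q
    · have hk' : M[q] = k := hlast q hq hdq
      have rp := h1 p hp
      simp only [Set.mem_Icc] at rp
      omega
    · push_neg at hdq
      have hpd : p < d := by omega
      have rp := h1 p hp
      have rq := h1 q hq
      simp only [Set.mem_Icc] at rp rq
      have hpk : M[p] ≠ k := hpref p hp hpd
      have hqk : M[q] ≠ k := hpref q hq hdq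
      by_contra hcon
      push_neg at hcon
      -- M[q] < M[p], both in [1, k-1]
      have hfp : fa (M[p]) ≤ p := hfale _ p hp rfl
      have hqg : q ≤ ga (M[q]) := hgage _ q hq rfl
      have hga : ga (M[q]) + 1 = fa (M[q] + 1) := hasc _ (by omega) (by omega)
      have hfle : fa (M[q] + 1) ≤ fa (M[p]) := by
        rcases eq_or_lt_of_le (show M[q] + 1 ≤ M[p] by omega) with h | h
        · exact le_of_eq (congrArg fa h)
        · exact le_of_lt (hfmono _ _ (by omega) h (by omega))
      omega
  · -- descending: prefix is reverse sorted
    right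
    have hgmono : ∀ a b, 1 ≤ a → a < b → b ≤ k - 1 → ga b < fa a := by
      intro a b ha1 hab
      induction b, hab using Nat.le_induction with
      | base =>
        intro hbk
        show ga (a + 1) < fa a
        have := hdesc a ha1 (by omega)
        omega
      | succ n hn ih =>
        intro hbk
        have h1' : ga n < fa a := ih (by omega)
        have := hdesc n (by omega) (by omega)
        have := hfaga n (by omega) (by omega)
        omega
    intro p q hp hq hpq hqd
    have hpd : p < d := by omega
    have rp := h1 p hp
    have rq := h1 q hq
    simp only [Set.mem_Icc] at rp rq
    have hpk : M[p] ≠ k := hpref p hp hpd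
    have hqk : M[q] ≠ k := hpref q hq hqd
    by_contra hcon
    push_neg at hcon
    -- M[p] < M[q]
    have hfp : fa (M[p]) ≤ p := hfale _ p hp rfl
    have hqg : q ≤ ga (M[q]) := hgage _ q hq rfl
    have := hgmono (M[p]) (M[q]) (by omega) (by omega) (by omega)
    omega

lemma core (k : ℕ) (L : List ℕ)
    (h1 : ∀ p (hp : p < L.length), L[p] ∈ Set.Icc 1 k)
    (h2 : ∀ i, i ∈ Set.Icc 1 k → i ∈ L)
    (hfree : ∀ A B : Set ℕ, IsCircularInterval k A → IsCircularInterval k B → ¬ Pat A B L) :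
    ∃ m, SortedIdx (L.rotate m) ∨ SortedIdx (L.reverse.rotate m) := by
  rcases Nat.eq_zero_or_pos k with hk0 | hk1
  · have hL0 : L.length = 0 := by
      by_contra h
      have := h1 0 (by omega)
      simp only [Set.mem_Icc, hk0] at this
      omega
    refine ⟨0, Or.inl ?_⟩
    intro p q hp hq hpq
    rw [List.length_rotate] at hq
    omega
  · have hkL : k ∈ L := h2 k (by simp only [Set.mem_Icc]; omega)
    have hP1 : ∀ p₁ p₂ p₃ p₄ (h₁ : p₁ < p₂) (h₂ : p₂ < p₃) (h₃ : p₃ < p₄) (h₄ : p₄ < L.length),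
        L[p₁]'(by omega) = k → L[p₂]'(by omega) ≠ k → L[p₃]'(by omega) = k → L[p₄] ≠ k →
        False := by
      intro p₁ p₂ p₃ p₄ h₁ h₂ h₃ h₄ v₁ v₂ v₃ v₄
      have r₂ := h1 p₂ (by omega)
      have r₄ := h1 p₄ (by omega)
      simp only [Set.mem_Icc] at r₂ r₄
      refine hfree (Set.Icc k k) (Set.Icc 1 (k-1) ∪ Set.Icc (k+1) k) (circ_Icc hk1 le_rfl)
        (circ_wrap (by omega) (by omega))
        ⟨p₁, p₂, p₃, p₄, h₁, h₂, h₃, h₄, ?_, ?_, ?_, ?_⟩ <;>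
        simp only [Set.mem_diff, Set.mem_Icc, Set.mem_union, not_or, not_and, not_le] <;>
        omega
    have hP2 : ∀ p₁ p₂ p₃ p₄ (h₁ : p₁ < p₂) (h₂ : p₂ < p₃) (h₃ : p₃ < p₄) (h₄ : p₄ < L.length),
        L[p₁]'(by omega) ≠ k → L[p₂]'(by omega) = k → L[p₃]'(by omega) ≠ k → L[p₄] = k →
        False := by
      intro p₁ p₂ p₃ p₄ h₁ h₂ h₃ h₄ v₁ v₂ v₃ v₄
      have r₁ := h1 p₁ (by omega)
      have r₃ := h1 p₃ (by omega)
      simp only [Set.mem_Icc] at r₁ r₃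
      refine hfree (Set.Icc 1 (k-1) ∪ Set.Icc (k+1) k) (Set.Icc k k)
        (circ_wrap (by omega) (by omega)) (circ_Icc hk1 le_rfl)
        ⟨p₁, p₂, p₃, p₄, h₁, h₂, h₃, h₄, ?_, ?_, ?_, ?_⟩ <;>
        simp only [Set.mem_diff, Set.mem_Icc, Set.mem_union, not_or, not_and, not_le] <;>
        omega
    obtain ⟨m₀, d, hd, hiffr⟩ := step1 hkL hP1 hP2
    have hlenr : (L.rotate m₀).length = L.length := List.length_rotate _ _
    have h1r : ∀ p (hp : p < (L.rotate m₀).length), (L.rotate m₀)[p] ∈ Set.Icc 1 k := by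
      intro p hp
      rw [List.getElem_rotate]
      exact h1 _ _
    have h2r : ∀ i, i ∈ Set.Icc 1 k → i ∈ (L.rotate m₀) := fun i hi =>
      List.mem_rotate.mpr (h2 i hi)
    have hfreer : ∀ A B : Set ℕ, IsCircularInterval k A → IsCircularInterval k B →
        ¬ Pat A B (L.rotate m₀) := by
      intro A B hA hB hp
      rcases pat_rotate hp with h | h
      · exact hfree A B hA hB h
      · exact hfree B A hB hA h
    rcases step2 k d hk1 (L.rotate m₀) h1r h2r (by omega) hiffr hfreer with hs | hrev
    · exact ⟨m₀, Or.inl hs⟩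
    · refine ⟨(L.length - m₀ % L.length) + (L.length - d), Or.inr ?_⟩
      have hn0 : 0 < L.length := by omega
      have hrot : ((L.rotate m₀).reverse).rotate (L.length - d)
          = L.reverse.rotate ((L.length - m₀ % L.length) + (L.length - d)) := by
        rw [List.reverse_rotate, List.rotate_rotate]
      rw [← hrot]
      intro p q hp hq hpq
      simp only [List.length_rotate, List.length_reverse] at hp hq
      have egen : ∀ i (hi : i < L.length),
          (((L.rotate m₀).reverse).rotate (L.length - d))[i]'(by
            simp only [List.length_rotate, List.length_reverse]; omega)
          = (L.rotate m₀)[L.length - 1 - ((i + (L.length - d)) % L.length)]'(by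
            simp only [List.length_rotate]; omega) := by
        intro i hi
        rw [List.getElem_rotate, List.getElem_reverse]
        simp only [List.length_rotate, List.length_reverse]
      rw [egen p hp, egen q hq]
      have hmod : ∀ i, i < L.length →
          ((i + (L.length - d)) % L.length = i + (L.length - d) ∧ i < d) ∨
          ((i + (L.length - d)) % L.length = i - d ∧ d ≤ i) := by
        intro i hi
        rcases modsplit (i + (L.length - d)) L.length (by omega) (by omega) with ⟨e, b⟩ | ⟨e, b⟩
        · exact Or.inl ⟨e, by omega⟩
        · refine Or.inr ⟨?_, by omega⟩
          rw [e]
          omega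
      by_cases hdq : q < d
      · have hdp : p < d := by omega
        rcases hmod p (by omega) with ⟨ep, _⟩ | ⟨_, _⟩
        swap
        · omega
        rcases hmod q (by omega) with ⟨eq', _⟩ | ⟨_, _⟩
        swap
        · omega
        simp only [ep, eq']
        have hip : L.length - 1 - (p + (L.length - d)) = d - 1 - p := by omega
        have hiq : L.length - 1 - (q + (L.length - d)) = d - 1 - q := by omega
        simp only [hip, hiq]
        exact hrev (d - 1 - q) (d - 1 - p) (by omega) (by omega) (by omega) (by omega)
      · rcases hmod q (by omega) with ⟨_, _⟩ | ⟨eq', _⟩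
        · omega
        simp only [eq']
        have hvq : (L.rotate m₀)[L.length - 1 - (q - d)]'(by omega) = k := by
          have := (hiffr (L.length - 1 - (q - d)) (by omega)).mpr (by omega)
          exact this
        have hvp := h1r (L.length - 1 - ((p + (L.length - d)) % L.length))
          (by omega)
        simp only [Set.mem_Icc] at hvp
        omega

lemma rot_inv (l : List X) (m : ℕ) : ∃ m', (l.rotate m).rotate m' = l := by
  rcases Nat.eq_zero_or_pos l.length with h0 | h0
  · refine ⟨0, ?_⟩
    have : l = [] := List.length_eq_zero_iff.mp h0
    simp [this]
  · refine ⟨l.length - m % l.length, ?_⟩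
    rw [List.rotate_rotate]
    have hmod : (m + (l.length - m % l.length)) % l.length = 0 := by
      rw [Nat.add_mod]
      rcases Nat.eq_zero_or_pos (m % l.length) with h | h
      · rw [h]
        simp
      · have hc : (l.length - m % l.length) % l.length = l.length - m % l.length :=
          Nat.mod_eq_of_lt (by omega)
        rw [hc]
        have hml : m % l.length < l.length := Nat.mod_lt _ h0
        have : m % l.length + (l.length - m % l.length) = l.length := by omega
        rw [this, Nat.mod_self]
    rw [← List.rotate_mod, hmod]
    simp


lemma sublist_pair_iff {v w : X} {l : List X} :
    List.Sublist [v, w] l ↔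
      ∃ p q, ∃ (hp : p < l.length) (hq : q < l.length), p < q ∧ l[p] = v ∧ l[q] = w := by
  constructor
  · intro h
    rw [List.sublist_iff_exists_fin_orderEmbedding_get_eq] at h
    obtain ⟨f, hf⟩ := h
    have h0 : (0:ℕ) < ([v, w] : List X).length := by simp
    have h1 : (1:ℕ) < ([v, w] : List X).length := by simp
    refine ⟨f ⟨0, h0⟩, f ⟨1, h1⟩, (f ⟨0, h0⟩).isLt, (f ⟨1, h1⟩).isLt,
      f.strictMono (by simp), ?_, ?_⟩
    · have := hf ⟨0, h0⟩
      simpa [List.get_eq_getElem] using this.symm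
    · have := hf ⟨1, h1⟩
      simpa [List.get_eq_getElem] using this.symm
  · rintro ⟨p, q, hp, hq, hpq, rfl, rfl⟩
    exact pair_sublist l p q hpq hq

end CBAux


/-- **Corollary (circular blocks).** Let `V` be partitioned into disjoint
nonempty sets `A 1, …, A k` and let `E` consist of all unions `⋃_{i ∈ α} A i`
over circular intervals `α` of `{1, …, k}`. Then an ordering `π` of `V` is an
`ABAB`-free ordering of the hypergraph `(V, E)` if and only if `π` is
equivalent to an ordering that has structure `A 1, …, A k`. -/

theorem circular_blocks_ABAB_free_iff {V : Type*} [Fintype V] (k : ℕ)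
    (A : ℕ → Set V)
    (hdisj : ∀ i ∈ Set.Icc 1 k, ∀ j ∈ Set.Icc 1 k, i ≠ j → Disjoint (A i) (A j))
    (hne : ∀ i ∈ Set.Icc 1 k, (A i).Nonempty)
    (hcover : ⋃ i ∈ Set.Icc 1 k, A i = Set.univ)
    (π : List V) (hπ : IsOrderingOf Set.univ π) :
    FreeOrdering 4
        {S | ∃ α : Set ℕ, IsCircularInterval k α ∧ S = ⋃ i ∈ α, A i} π ↔
      ∃ π' : List V, IsOrderingOf Set.univ π' ∧ HasStructure k A π' ∧
        EquivOrderings π' π := by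
  classical
  obtain ⟨hnodup, hmem⟩ := hπ
  have hex : ∀ v : V, ∃ i, i ∈ Set.Icc 1 k ∧ v ∈ A i := by
    intro v
    have hv : v ∈ ⋃ i ∈ Set.Icc 1 k, A i := by rw [hcover]; trivial
    simpa using hv
  choose ind hind1 hind2 using hex
  have hind_unique : ∀ v i, i ∈ Set.Icc 1 k → v ∈ A i → ind v = i := by
    intro v i hi hv
    by_contra h
    exact Set.disjoint_left.mp (hdisj i hi (ind v) (hind1 v) (Ne.symm h)) hv (hind2 v)
  have hmemU : ∀ (α : Set ℕ), α ⊆ Set.Icc 1 k → ∀ v, (v ∈ ⋃ i ∈ α, A i ↔ ind v ∈ α) := by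
    intro α hα v
    constructor
    · intro hv
      simp only [Set.mem_iUnion] at hv
      obtain ⟨i, hiα, hvi⟩ := hv
      rw [hind_unique v i (hα hiα) hvi]
      exact hiα
    · intro h
      simp only [Set.mem_iUnion]
      exact ⟨ind v, h, hind2 v⟩
  have hmemD : ∀ (α β : Set ℕ), α ⊆ Set.Icc 1 k → β ⊆ Set.Icc 1 k → ∀ v,
      (v ∈ (⋃ i ∈ α, A i) \ (⋃ i ∈ β, A i) ↔ ind v ∈ α \ β) := by
    intro α β hα hβ v
    simp only [Set.mem_diff, hmemU α hα v, hmemU β hβ v]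
  have hPatT : ∀ (α β : Set ℕ), α ⊆ Set.Icc 1 k → β ⊆ Set.Icc 1 k → ∀ (l : List V),
      (CBAux.Pat (⋃ i ∈ α, A i) (⋃ i ∈ β, A i) l ↔ CBAux.Pat α β (l.map ind)) := by
    intro α β hα hβ l
    constructor
    · rintro ⟨p₁, p₂, p₃, p₄, h₁, h₂, h₃, h₄, m₁, m₂, m₃, m₄⟩
      refine ⟨p₁, p₂, p₃, p₄, h₁, h₂, h₃, by simpa using h₄, ?_, ?_, ?_, ?_⟩ <;>
        simp only [List.getElem_map]
      · exact (hmemD α β hα hβ _).mp m₁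
      · exact (hmemD β α hβ hα _).mp m₂
      · exact (hmemD α β hα hβ _).mp m₃
      · exact (hmemD β α hβ hα _).mp m₄
    · rintro ⟨p₁, p₂, p₃, p₄, h₁, h₂, h₃, h₄, m₁, m₂, m₃, m₄⟩
      simp only [List.getElem_map] at m₁ m₂ m₃ m₄
      refine ⟨p₁, p₂, p₃, p₄, h₁, h₂, h₃, by simpa using h₄, ?_, ?_, ?_, ?_⟩
      · exact (hmemD α β hα hβ _).mpr m₁
      · exact (hmemD β α hβ hα _).mpr m₂
      · exact (hmemD α β hα hβ _).mpr m₃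
      · exact (hmemD β α hβ hα _).mpr m₄
  have h1any : ∀ (l : List V) p (hp : p < (l.map ind).length),
      (l.map ind)[p] ∈ Set.Icc 1 k := by
    intro l p hp
    simp only [List.getElem_map]
    exact hind1 _
  have struct_of_sorted : ∀ (l : List V), (∀ v : V, v ∈ l) → CBAux.SortedIdx (l.map ind) →
      HasStructure k A l := by
    intro l hall hs i hi j hj hij v hv w hw
    have hiv : ind v = i := hind_unique v i hi hv
    have hjw : ind w = j := hind_unique w j hj hw
    have hvw : v ≠ w := by
      intro h
      rw [h] at hiv
      rw [hiv] at hjw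
      exact hij hjw
    obtain ⟨pv, hpvlt, hpv⟩ := List.getElem_of_mem (hall v)
    obtain ⟨pw, hpwlt, hpw⟩ := List.getElem_of_mem (hall w)
    constructor
    · intro hprec
      obtain ⟨p, q, hp, hq, hpq, hv', hw'⟩ := (CBAux.sublist_pair_iff).mp hprec
      have hle := hs p q (by simpa using hp) (by simpa using hq) hpq
      simp only [List.getElem_map] at hle
      rw [hv', hw'] at hle
      rw [hiv, hjw] at hle
      omega
    · intro hij'
      have hppw : pv ≠ pw := by
        intro h
        apply hvw
        rw [← hpv, ← hpw]
        simp only [h]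
      rcases lt_or_gt_of_ne hppw with h | h
      · show List.Sublist [v, w] l
        have hsub := CBAux.pair_sublist l pv pw h hpwlt
        rw [hpv, hpw] at hsub
        exact hsub
      · exfalso
        have hle := hs pw pv (by simpa using hpwlt) (by simpa using hpvlt) h
        simp only [List.getElem_map] at hle
        rw [hpv, hpw] at hle
        rw [hiv, hjw] at hle
        omega
  have sorted_of_struct : ∀ (l : List V), HasStructure k A l → CBAux.SortedIdx (l.map ind) := by
    intro l hstr p q hp hq hpq
    simp only [List.length_map] at hp hq
    simp only [List.getElem_map]
    by_cases h : ind (l[p]) = ind (l[q])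
    · exact le_of_eq h
    · have hprec : Precedes l (l[p]) (l[q]) := CBAux.pair_sublist l p q hpq hq
      have := (hstr (ind (l[p])) (hind1 _) (ind (l[q])) (hind1 _) h
        (l[p]) (hind2 _) (l[q]) (hind2 _)).mp hprec
      omega
  constructor
  · intro hfreeO
    have hfreeL : ∀ α β : Set ℕ, IsCircularInterval k α → IsCircularInterval k β →
        ¬ CBAux.Pat α β (π.map ind) := by
      intro α β hα hβ hp
      have hπp : CBAux.Pat (⋃ i ∈ α, A i) (⋃ i ∈ β, A i) π :=
        (hPatT α β hα.1 hβ.1 π).mpr hp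
      exact hfreeO _ ⟨α, hα, rfl⟩ _ ⟨β, hβ, rfl⟩ (CBAux.formPattern_of_pat hπp)
    have h2L : ∀ i, i ∈ Set.Icc 1 k → i ∈ (π.map ind) := by
      intro i hi
      obtain ⟨v, hv⟩ := hne i hi
      rw [List.mem_map]
      exact ⟨v, (hmem v).mpr trivial, hind_unique v i hi hv⟩
    obtain ⟨m, hm⟩ := CBAux.core k (π.map ind) (h1any π) h2L hfreeL
    rcases hm with hs | hs
    · refine ⟨π.rotate m, ⟨List.nodup_rotate.mpr hnodup, ?_⟩, ?_, ?_⟩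
      · intro v
        rw [List.mem_rotate]
        exact hmem v
      · apply struct_of_sorted
        · intro v
          rw [List.mem_rotate]
          exact (hmem v).mpr trivial
        · rw [List.map_rotate]
          exact hs
      · left
        obtain ⟨m', hm'⟩ := CBAux.rot_inv π m
        exact ⟨m', hm'.symm⟩
    · refine ⟨π.reverse.rotate m,
        ⟨List.nodup_rotate.mpr (List.nodup_reverse.mpr hnodup), ?_⟩, ?_, ?_⟩
      · intro v
        rw [List.mem_rotate, List.mem_reverse]
        exact hmem v
      · apply struct_of_sorted
        · intro v
          rw [List.mem_rotate, List.mem_reverse]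
          exact (hmem v).mpr trivial
        · rw [List.map_rotate, List.map_reverse]
          exact hs
      · right
        have hrev : (π.reverse.rotate m).reverse
            = π.rotate (π.length - m % π.length) := by
          rw [List.reverse_rotate]
          simp
        obtain ⟨m'', hm''⟩ := CBAux.rot_inv π (π.length - m % π.length)
        refine ⟨m'', ?_⟩
        rw [hrev]
        exact hm''.symm
  · rintro ⟨π', ⟨hnd', hmem'⟩, hstr, heq⟩
    intro S hS T hT hform
    obtain ⟨α, hα, rfl⟩ := hS
    obtain ⟨β, hβ, rfl⟩ := hT
    have hpat := CBAux.pat_of_formPattern hform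
    have hfree' : ∀ (α β : Set ℕ), IsCircularInterval k α → IsCircularInterval k β →
        ¬ CBAux.Pat (⋃ i ∈ α, A i) (⋃ i ∈ β, A i) π' := by
      intro α β hα hβ hp
      have hpl : CBAux.Pat α β (π'.map ind) := (hPatT α β hα.1 hβ.1 π').mp hp
      exact CBAux.sorted_not_pat (h1any π') (sorted_of_struct π' hstr) hα hβ hpl
    rcases heq with ⟨m, rfl⟩ | ⟨m, rfl⟩
    · rcases CBAux.pat_rotate hpat with h | h
      · exact hfree' α β hα hβ h
      · exact hfree' β α hβ hα h
    · rcases CBAux.pat_rotate hpat with h | h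
      · exact hfree' β α hβ hα (CBAux.pat_reverse h)
      · exact hfree' α β hα hβ (CBAux.pat_reverse h)
end

section
/- Let V = {1, 2, …, N} with N ≥ 7 and let E be the set of all 2-intervals of V (unions of at most two intervals of consecutive integers). Then a linear ordering π of V is an ABABA-free ordering of the hypergraph H = (V, E) if and only if π is the ordering 1, 2, …, N or the ordering N, N−1, …, 1. -/
/-- `S` is a 2-interval of `{1, …, N}`: the union of two (possibly empty)
sets of consecutive integers. -/
def IsTwoInterval (N : ℕ) (S : Set ℕ) : Prop :=
  S ⊆ Set.Icc 1 N ∧ ∃ a b c d, S = Set.Icc a b ∪ Set.Icc c d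

/-
A 2-interval is a union of two order-connected sets, so along a monotone ordering it cannot
alternate in, out, in, out, in: two of its three "in" points lie in the same interval, which
then also contains the "out" point between them.

Conversely, suppose `x` and `x + 1` are at least two apart in an ordering `π`. Since `N ≥ 7`,
some vertex `z` sits at a position not adjacent to either of them. The 2-interval `{x, x + 1, z}`
occupies exactly three pairwise non-adjacent positions, and the two vertices immediately after
the first two of them form a 2-interval `B`; the five vertices form an `ABABA` pattern.
Hence consecutive integers are adjacent in `π`, and an injective walk with unit steps is
monotone.
-/

open Set

section Patterns

variable {α : Type*}

theorem List.getElem_cons_sublist_drop {l t : List α} {i j : ℕ} (hji : j ≤ i)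
    (hi : i < l.length) (ht : t.Sublist (l.drop (i + 1))) : (l[i] :: t).Sublist (l.drop j) :=
  (List.drop_eq_getElem_cons hi ▸ ht.cons_cons l[i]).trans (List.drop_sublist_drop_left l hji)

theorem formPattern_five_iff {A B : Set α} {π : List α} :
    FormPattern 5 A B π ↔ ∃ a₁ b₁ a₂ b₂ a₃, [a₁, b₁, a₂, b₂, a₃].Sublist π ∧
      a₁ ∈ A \ B ∧ b₁ ∈ B \ A ∧ a₂ ∈ A \ B ∧ b₂ ∈ B \ A ∧ a₃ ∈ A \ B := by
  constructor
  · rintro ⟨w, hw, hlen, hcond⟩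
    match w, hlen with
    | [a₁, b₁, a₂, b₂, a₃], _ =>
      exact ⟨a₁, b₁, a₂, b₂, a₃, hw, (hcond 0 (by simp)).1 rfl, (hcond 1 (by simp)).2 rfl,
        (hcond 2 (by simp)).1 rfl, (hcond 3 (by simp)).2 rfl, (hcond 4 (by simp)).1 rfl⟩
  · rintro ⟨a₁, b₁, a₂, b₂, a₃, hw, h₁, h₂, h₃, h₄, h₅⟩
    refine ⟨_, hw, rfl, fun i hi => ?_⟩
    simp only [List.length_cons, List.length_nil] at hi
    interval_cases i <;> simp [*]

theorem formPattern_five_reverse_iff {A B : Set α} {π : List α} :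
    FormPattern 5 A B π.reverse ↔ FormPattern 5 A B π := by
  simp only [formPattern_five_iff, List.sublist_reverse_iff, List.reverse_cons, List.reverse_nil,
    List.nil_append, List.cons_append]
  constructor
  · rintro ⟨a₁, b₁, a₂, b₂, a₃, hw, h₁, h₂, h₃, h₄, h₅⟩
    exact ⟨a₃, b₂, a₂, b₁, a₁, hw, h₅, h₄, h₃, h₂, h₁⟩
  · rintro ⟨a₁, b₁, a₂, b₂, a₃, hw, h₁, h₂, h₃, h₄, h₅⟩
    exact ⟨a₃, b₂, a₂, b₁, a₁, by simpa using hw, h₅, h₄, h₃, h₂, h₁⟩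

theorem freeOrdering_five_reverse_iff {E : Set (Set α)} {π : List α} :
    FreeOrdering 5 E π.reverse ↔ FreeOrdering 5 E π := by
  simp only [FreeOrdering, formPattern_five_reverse_iff]

theorem formPattern_five_of_spread {π : List α} (hπ : π.Nodup) {A : Set α} {i j k : ℕ}
    (hij : i + 2 ≤ j) (hjk : j + 2 ≤ k) (hk : k < π.length)
    (hA : ∀ l (hl : l < π.length), π[l] ∈ A ↔ l = i ∨ l = j ∨ l = k) :
    FormPattern 5 A {π[i + 1], π[j + 1]} π := by
  have hsub : [π[i], π[i + 1], π[j], π[j + 1], π[k]].Sublist π := by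
    simpa using List.getElem_cons_sublist_drop (j := 0) (Nat.zero_le i) _ <|
      List.getElem_cons_sublist_drop le_rfl _ <| List.getElem_cons_sublist_drop (by omega) _ <|
      List.getElem_cons_sublist_drop le_rfl _ <| List.getElem_cons_sublist_drop (by omega) hk <|
      List.nil_sublist _
  refine formPattern_five_iff.2 ⟨_, _, _, _, _, hsub, ?_⟩
  simp only [Set.mem_sdiff, Set.mem_insert_iff, Set.mem_singleton_iff, hA, hπ.getElem_inj_iff,
    true_or, or_true, true_and]
  omega

end Patterns

theorem not_alternating_union_of_ordConnected {α : Type*} [Preorder α] {I J : Set α}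
    (hI : I.OrdConnected) (hJ : J.OrdConnected) {v₀ v₁ v₂ v₃ v₄ : α}
    (h₀₁ : v₀ ≤ v₁) (h₁₂ : v₁ ≤ v₂) (h₂₃ : v₂ ≤ v₃) (h₃₄ : v₃ ≤ v₄)
    (h₀ : v₀ ∈ I ∪ J) (h₁ : v₁ ∉ I ∪ J) (h₂ : v₂ ∈ I ∪ J) (h₃ : v₃ ∉ I ∪ J)
    (h₄ : v₄ ∈ I ∪ J) : False := by
  have gap : ∀ {K : Set α}, K.OrdConnected → ∀ {u v w : α}, u ≤ v → v ≤ w → u ∈ K → w ∈ K → v ∈ K :=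
    fun hK _ _ _ huv hvw hu hw => hK.out hu hw ⟨huv, hvw⟩
  have h₁₄ : v₁ ≤ v₄ := h₁₂.trans (h₂₃.trans h₃₄)
  have := @gap _ hI _ _ _ h₀₁ h₁₂
  have := @gap _ hJ _ _ _ h₀₁ h₁₂
  have := @gap _ hI _ _ _ h₂₃ h₃₄
  have := @gap _ hJ _ _ _ h₂₃ h₃₄
  have := @gap _ hI _ _ _ h₀₁ h₁₄
  have := @gap _ hJ _ _ _ h₀₁ h₁₄
  simp only [Set.mem_union, not_or] at h₀ h₁ h₂ h₃ h₄
  rcases h₀ with h₀ | h₀ <;> rcases h₂ with h₂ | h₂ <;> rcases h₄ with h₄ | h₄ <;> simp_all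

theorem freeOrdering_twoInterval_of_pairwise_lt {N : ℕ} {π : List ℕ}
    (hπ : π.Pairwise (· < ·)) : FreeOrdering 5 {S | IsTwoInterval N S} π := by
  rintro _ ⟨-, a, b, c, d, rfl⟩ B - hpat
  obtain ⟨a₁, b₁, a₂, b₂, a₃, hsub, h₁, h₂, h₃, h₄, h₅⟩ := formPattern_five_iff.1 hpat
  have hlt := hπ.sublist hsub
  simp only [List.pairwise_cons, List.mem_cons, List.not_mem_nil, forall_eq_or_imp,
    IsEmpty.forall_iff, forall_const, and_true, List.Pairwise.nil] at hlt
  exact not_alternating_union_of_ordConnected ordConnected_Icc ordConnected_Icc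
    hlt.1.1.le hlt.2.1.1.le hlt.2.2.1.1.le hlt.2.2.2.le h₁.1 h₂.2 h₃.1 h₄.2 h₅.1

theorem IsOrderingOf.length_eq {N : ℕ} {π : List ℕ} (hπ : IsOrderingOf (Icc 1 N) π) :
    π.length = N := by
  have hfin : π.toFinset = Finset.Icc 1 N := by
    ext v
    simp [hπ.2 v]
  rw [← List.toFinset_card_of_nodup hπ.1, hfin, Nat.card_Icc, Nat.add_sub_cancel]

theorem List.eq_of_idxOf_getElem {α : Type*} [DecidableEq α] {l l' : List α}
    (hlen : l.length = l'.length) (hidx : ∀ i (hi : i < l'.length), l.idxOf l'[i] = i) :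
    l = l' := by
  refine List.ext_getElem hlen fun i hi hi' => ?_
  have h : l.idxOf l'[i] < l.length := (hidx i hi').symm ▸ hi
  have hget := List.getElem_idxOf h
  simp only [hidx i hi'] at hget
  exact hget

theorem exists_step_of_injOn_of_abs_sub_eq_one {g : ℕ → ℤ} {a b : ℕ}
    (hinj : InjOn g (Icc a b)) (hstep : ∀ k ∈ Ico a b, |g (k + 1) - g k| = 1) :
    ∃ s : ℤ, |s| = 1 ∧ ∀ k ∈ Icc a b, g k = g a + s * (k - a) := by
  rcases le_or_gt b a with hba | hab
  · refine ⟨1, abs_one, fun k hk => ?_⟩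
    obtain rfl : k = a := le_antisymm (hk.2.trans hba) hk.1
    simp
  set s := g (a + 1) - g a
  have hconst : ∀ k ∈ Ico a b, g (k + 1) - g k = s := by
    rintro k ⟨hak, hkb⟩
    induction k, hak using Nat.le_induction with
    | base => rfl
    | succ k hak ih =>
      have hback : g (k + 1 + 1) ≠ g k := fun h => by
        have := hinj ⟨by omega, by omega⟩ ⟨hak, by omega⟩ h
        omega
      have h₁ := (abs_eq zero_le_one).1 (hstep k ⟨hak, by omega⟩)
      have h₂ := (abs_eq zero_le_one).1 (hstep (k + 1) ⟨by omega, hkb⟩)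
      have := ih (by omega)
      omega
  refine ⟨s, hstep a ⟨le_rfl, hab⟩, ?_⟩
  rintro k ⟨hak, hkb⟩
  induction k, hak using Nat.le_induction with
  | base => simp
  | succ k hak ih =>
    have := hconst k ⟨hak, hkb⟩
    rw [ih (by omega)] at this
    push_cast
    linarith

theorem isTwoInterval_pair {N a b : ℕ} (ha : a ∈ Icc 1 N) (hb : b ∈ Icc 1 N) :
    IsTwoInterval N {a, b} :=
  ⟨by rintro v (rfl | rfl) <;> assumption, a, a, b, b, by rw [Icc_self, Icc_self, insert_eq]⟩

section FreeOrderingOfTwoIntervals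

variable {N : ℕ} {π : List ℕ}

theorem IsOrderingOf.eq_range'_or_reverse (hπ : IsOrderingOf (Icc 1 N) π)
    (hadj : ∀ k ∈ Ico 1 N, |(π.idxOf (k + 1) : ℤ) - π.idxOf k| = 1) :
    π = List.range' 1 N ∨ π = (List.range' 1 N).reverse := by
  have hlen := hπ.length_eq
  have hmem : ∀ k ∈ Icc 1 N, k ∈ π := fun k hk => (hπ.2 k).2 hk
  have hlt : ∀ k ∈ Icc 1 N, π.idxOf k < N :=
    fun k hk => hlen ▸ List.idxOf_lt_length_of_mem (hmem k hk)
  have hinj : InjOn (fun k => (π.idxOf k : ℤ)) (Icc 1 N) :=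
    fun k hk _ _ h => (List.idxOf_inj (hmem k hk)).1 (Nat.cast_injective h)
  obtain ⟨s, hs, hg⟩ := exists_step_of_injOn_of_abs_sub_eq_one hinj hadj
  rcases (abs_eq zero_le_one).1 hs with rfl | rfl
  · left
    refine List.eq_of_idxOf_getElem (by simp [hlen]) fun i hi => ?_
    simp only [List.length_range'] at hi
    have h₁ := hg N ⟨by omega, le_rfl⟩
    have hgi := hg (1 + i) ⟨by omega, by omega⟩
    have := hlt N ⟨by omega, le_rfl⟩
    simp only [List.getElem_range', one_mul]
    omega
  · right
    refine List.eq_of_idxOf_getElem (by simp [hlen]) fun i hi => ?_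
    simp only [List.length_reverse, List.length_range'] at hi
    have h₁ := hg N ⟨by omega, le_rfl⟩
    have hgi := hg (N - i) ⟨by omega, by omega⟩
    have := hlt 1 ⟨le_rfl, by omega⟩
    simp only [List.getElem_reverse, List.getElem_range', List.length_range', one_mul]
    rw [show 1 + (N - 1 - i) = N - i by omega]
    omega

theorem FreeOrdering.getElem_add_one_ne (hN : 7 ≤ N) (hπ : IsOrderingOf (Icc 1 N) π)
    (hfree : FreeOrdering 5 {S | IsTwoInterval N S} π) {i j : ℕ} (hij : i + 2 ≤ j)
    (hj : j < π.length) : π[i] + 1 ≠ π[j] ∧ π[j] + 1 ≠ π[i] := by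
  rw [← not_or]
  intro hcons
  have hV : ∀ l (hl : l < π.length), π[l] ∈ Icc 1 N := fun l hl => (hπ.2 _).1 (π.getElem_mem hl)
  -- `N ≥ 7` leaves a position that is neither `i`, `j` nor adjacent to them.
  obtain ⟨r, hr, hrij⟩ :
      ∃ r ∈ Finset.range π.length, r ∉ ({i - 1, i, i + 1, j - 1, j, j + 1} : Finset ℕ) :=
    Finset.exists_mem_notMem_of_card_lt_card <| Finset.card_le_six.trans_lt <| by
      rw [Finset.card_range, hπ.length_eq]; omega
  simp only [Finset.mem_range] at hr
  simp only [Finset.mem_insert, Finset.mem_singleton, not_or] at hrij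
  set A : Set ℕ := {π[i], π[j], π[r]}
  have hA : IsTwoInterval N A := by
    refine ⟨?_, min π[i] π[j], max π[i] π[j], π[r], π[r], ?_⟩
    · rintro v (rfl | rfl | rfl) <;> apply hV
    · ext v
      simp only [A, mem_insert_iff, mem_singleton_iff, mem_union, mem_Icc]
      omega
  have hAmem : ∀ l (hl : l < π.length), π[l] ∈ A ↔ l = i ∨ l = j ∨ l = r := by
    simp [A, hπ.1.getElem_inj_iff]
  have hspread : ∀ {a b c : ℕ} (hab : a + 2 ≤ b) (hbc : b + 2 ≤ c) (hc : c < π.length),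
      (∀ l, l = i ∨ l = j ∨ l = r ↔ l = a ∨ l = b ∨ l = c) → False :=
    fun hab hbc hc hperm => hfree A hA _ (isTwoInterval_pair (hV _ _) (hV _ _)) <|
      formPattern_five_of_spread hπ.1 hab hbc hc fun l hl => (hAmem l hl).trans (hperm l)
  rcases lt_or_gt_of_ne hrij.2.1 with hri | hir
  · exact hspread (by omega : r + 2 ≤ i) hij hj (by omega)
  rcases lt_or_gt_of_ne hrij.2.2.2.2.1 with hrj | hjr
  · exact hspread (by omega : i + 2 ≤ r) (by omega : r + 2 ≤ j) hj (by omega)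
  · exact hspread hij (by omega : j + 2 ≤ r) hr (by omega)

theorem FreeOrdering.abs_idxOf_succ_sub_idxOf (hN : 7 ≤ N) (hπ : IsOrderingOf (Icc 1 N) π)
    (hfree : FreeOrdering 5 {S | IsTwoInterval N S} π) {k : ℕ} (hk : k ∈ Ico 1 N) :
    |(π.idxOf (k + 1) : ℤ) - π.idxOf k| = 1 := by
  have hk₀ : k ∈ π := (hπ.2 k).2 ⟨hk.1, hk.2.le⟩
  have hk₁ : k + 1 ∈ π := (hπ.2 _).2 ⟨by omega, hk.2⟩
  have hp := List.getElem_idxOf (List.idxOf_lt_length_of_mem hk₀)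
  have hq := List.getElem_idxOf (List.idxOf_lt_length_of_mem hk₁)
  have hpq : π.idxOf k ≠ π.idxOf (k + 1) := fun h => by
    have := (List.idxOf_inj hk₀).1 h
    omega
  set p := π.idxOf k
  set q := π.idxOf (k + 1)
  rw [abs_eq zero_le_one]
  by_contra hfar
  rcases lt_or_gt_of_ne hpq with hlt | hgt
  · exact (hfree.getElem_add_one_ne hN hπ (i := p) (j := q) (by omega) _).1 (by rw [hp, hq])
  · exact (hfree.getElem_add_one_ne hN hπ (i := q) (j := p) (by omega) _).2 (by rw [hp, hq])

end FreeOrderingOfTwoIntervals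

/-- **Lemma (two intervals).** Let `V = {1, …, N}` with `N ≥ 7` and let `E` be
the set of all 2-intervals of `V`. Then an ordering `π` of `V` is an
`ABABA`-free ordering of the hypergraph `(V, E)` if and only if `π` is the
ordering `1, 2, …, N` or the ordering `N, N-1, …, 1`. -/
theorem two_intervals_ABABA_free_iff (N : ℕ) (hN : 7 ≤ N) (π : List ℕ)
    (hπ : IsOrderingOf (Set.Icc 1 N) π) :
    FreeOrdering 5 {S | IsTwoInterval N S} π ↔
      π = List.range' 1 N ∨ π = (List.range' 1 N).reverse := by
  refine ⟨fun hfree => hπ.eq_range'_or_reverse fun k hk => hfree.abs_idxOf_succ_sub_idxOf hN hπ hk,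
    ?_⟩
  rintro (rfl | rfl)
  · exact freeOrdering_twoInterval_of_pairwise_lt List.pairwise_lt_range'
  · rw [freeOrdering_five_reverse_iff]
    exact freeOrdering_twoInterval_of_pairwise_lt List.pairwise_lt_range'
end

section
/- Let H = (V, E) be a hypergraph and let k be a positive integer. Then H is (AB)^(k−1)A-free if and only if the hypergraph H_{2k+1} is (AB)^k A-free, where H_{2k+1} is obtained from H by adding 2k+1 new vertices X = {x₁, …, x_{2k+1}} and taking edge set E ∪ {E ∪ {x} : E ∈ E, x ∈ X}. -/
/-- The hypergraph with vertex set `Vs` and edge set `E` admits an ordering of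
its vertices that is free of alternating patterns of length `n`. -/
def HasFreeOrdering {α : Type*} (n : ℕ) (Vs : Set α) (E : Set (Set α)) : Prop :=
  ∃ π : List α, IsOrderingOf Vs π ∧ FreeOrdering n E π

/-- The edge set of the hypergraph `H_t`: the original edges, together with
each original edge extended by one of the `t` new vertices. -/
def ExtendedEdges {α : Type*} (t : ℕ) (E : Set (Set α)) : Set (Set (α ⊕ Fin t)) :=
  ((fun A => Sum.inl '' A) '' E) ∪
    {B | ∃ A ∈ E, ∃ x : Fin t, B = Sum.inl '' A ∪ {Sum.inr x}}

/-! An `(AB)^k A` pattern in an ordering of `H_{2k+1}` that lists the new vertices first can use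
at most two of them, and only as its first two entries, because an extended edge contains a
single new vertex; dropping those two entries leaves an `(AB)^(k-1) A` pattern of `H`.
Conversely, an `(AB)^(k-1) A` pattern among the old vertices of an ordering of `H_{2k+1}` has
`2k` gaps, so by pigeonhole two of the `2k+1` new vertices `x`, `y` lie in the same gap;
extending `A` and `B` by `x` and `y`, in the order the parity of the gap demands, yields an
`(AB)^k A` pattern. -/

open List

section Alternating

variable {α : Type*}

def IsAlternating (A B : Set α) : List α → Prop
  | [] => True
  | x :: w => x ∈ A \ B ∧ IsAlternating B A w

theorem isAlternating_iff_getElem {A B : Set α} {w : List α} :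
    IsAlternating A B w ↔ ∀ (i : ℕ) (h : i < w.length),
      (i % 2 = 0 → w[i] ∈ A \ B) ∧ (i % 2 = 1 → w[i] ∈ B \ A) := by
  induction w generalizing A B with
  | nil => simp [IsAlternating]
  | cons x w ih =>
    simp only [IsAlternating, ih, length_cons]
    constructor
    · rintro ⟨hx, hw⟩ (_ | i) hi
      · simpa using hx
      · have := hw i (by omega)
        exact ⟨fun h => this.2 (by omega), fun h => this.1 (by omega)⟩
    · intro h
      refine ⟨(h 0 (by omega)).1 rfl, fun i hi => ?_⟩
      have := h (i + 1) (by omega)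
      exact ⟨fun h => this.2 (by omega), fun h => this.1 (by omega)⟩

theorem formPattern_iff {n : ℕ} {A B : Set α} {π : List α} :
    FormPattern n A B π ↔ ∃ w, w <+ π ∧ w.length = n ∧ IsAlternating A B w := by
  simp only [FormPattern, isAlternating_iff_getElem]

theorem isAlternating_map {β : Type*} {f : β → α} {A B : Set α} {w : List β} :
    IsAlternating A B (w.map f) ↔ IsAlternating (f ⁻¹' A) (f ⁻¹' B) w := by
  induction w generalizing A B with
  | nil => simp [IsAlternating]
  | cons x w ih => simp [IsAlternating, ih]

namespace IsAlternating

variable {A B : Set α} {w : List α}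

theorem drop_two (h : IsAlternating A B w) : IsAlternating A B (w.drop 2) :=
  match w, h with
  | [], _ | [_], _ => trivial
  | _ :: _ :: _, h => h.2.2

theorem insert_insert {a b : α} (h : IsAlternating A B w) (ha : a ∉ B) (hb : b ∉ A) :
    IsAlternating (insert a A) (insert b B) w := by
  induction w generalizing A B a b with
  | nil => trivial
  | cons x w ih =>
    obtain ⟨⟨hxA, hxB⟩, hw⟩ := h
    refine ⟨⟨Set.mem_insert_of_mem a hxA, ?_⟩, ih hw hb ha⟩
    rintro (rfl | hxB')
    exacts [hb hxA, hxB hxB']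

theorem insert_pair {w₁ w₂ : List α} {a b : α} (h : IsAlternating A B (w₁ ++ w₂))
    (hab : a ≠ b) (ha : a ∉ A ∪ B) (hb : b ∉ A ∪ B) :
    ∃ p q, (p = a ∧ q = b ∨ p = b ∧ q = a) ∧
      IsAlternating (insert p A) (insert q B) (w₁ ++ a :: b :: w₂) := by
  induction w₁ generalizing A B with
  | nil =>
    simp only [Set.mem_union, not_or] at ha hb
    exact ⟨a, b, .inl ⟨rfl, rfl⟩, ⟨by simp [hab, ha.2], by simp [hab.symm, hb.1],
      h.insert_insert ha.2 hb.1⟩⟩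
  | cons x w₁ ih =>
    obtain ⟨⟨hxA, hxB⟩, hw⟩ := h
    obtain ⟨p, q, hpq, hpq'⟩ := ih hw (by rwa [Set.union_comm]) (by rwa [Set.union_comm])
    have hpA : p ∉ A := by rcases hpq with ⟨rfl, -⟩ | ⟨rfl, -⟩ <;> simp_all
    refine ⟨q, p, hpq.symm.imp And.symm And.symm, ⟨Set.mem_insert_of_mem q hxA, ?_⟩, hpq'⟩
    rintro (rfl | hxB')
    exacts [hpA hxA, hxB hxB']

end IsAlternating

end Alternating

section Pigeonhole

variable {α : Type*} {p : α → Bool}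

theorem exists_pair_sublist_of_two_le_countP {l : List α} (h : 2 ≤ l.countP p) :
    ∃ a b, p a ∧ p b ∧ [a, b] <+ l := by
  rw [countP_eq_length_filter] at h
  match hf : l.filter p, h with
  | a :: b :: r, _ =>
    have hsub : a :: b :: r <+ l := hf ▸ filter_sublist
    exact ⟨a, b, (mem_filter.1 (hf ▸ mem_cons_self)).2,
      (mem_filter.1 (hf ▸ mem_cons_of_mem a mem_cons_self)).2,
      (sublist_append_left [a, b] r).trans hsub⟩

theorem exists_pair_sublist_in_gap :
    ∀ {w l : List α}, w <+ l → (∀ x ∈ w, p x = false) → w.length + 2 ≤ l.countP p →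
      ∃ w₁ w₂ a b, w = w₁ ++ w₂ ∧ p a ∧ p b ∧ w₁ ++ a :: b :: w₂ <+ l
  | [], _, _, _, h => by
    obtain ⟨a, b, ha, hb, hab⟩ := exists_pair_sublist_of_two_le_countP h
    exact ⟨[], [], a, b, rfl, ha, hb, hab⟩
  | x :: w, _, hsub, hp, h => by
    obtain ⟨r₁, r₂, rfl, hx, hw⟩ := cons_sublist_iff.1 hsub
    obtain ⟨s, s', rfl⟩ := append_of_mem hx
    rw [append_assoc, cons_append] at h ⊢
    have hw' : w <+ s' ++ r₂ := hw.trans (sublist_append_right s' r₂)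
    rw [countP_append, countP_cons_of_neg (by simp [hp x mem_cons_self])] at h
    by_cases hs : 2 ≤ s.countP p
    · obtain ⟨a, b, ha, hb, hab⟩ := exists_pair_sublist_of_two_le_countP hs
      exact ⟨[], x :: w, a, b, rfl, ha, hb, hab.append (hw'.cons_cons x)⟩
    · obtain ⟨w₁, w₂, a, b, rfl, ha, hb, hsub'⟩ :=
        exists_pair_sublist_in_gap hw' (fun y hy => hp y (mem_cons_of_mem x hy))
          (by simp only [length_cons] at h; omega)
      exact ⟨x :: w₁, w₂, a, b, rfl, ha, hb,
        (hsub'.cons_cons x).trans (sublist_append_right s _)⟩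

end Pigeonhole

section Extension

variable {V : Type*} {t : ℕ} {E : Set (Set V)}

theorem map_inl_filterMap_getLeft {β : Type*} (l : List (V ⊕ β)) :
    (l.filterMap Sum.getLeft?).map Sum.inl = l.filter (·.isLeft) := by
  induction l with
  | nil => rfl
  | cons x l ih => cases x <;> simp [filterMap_cons, filter_cons, ih]

theorem le_countP_isRight {l : List (V ⊕ Fin t)} (hl : ∀ x, Sum.inr x ∈ l) :
    t ≤ l.countP (·.isRight) := by
  have hsub : ((finRange t).map Sum.inr).Subperm l :=
    ((nodup_finRange t).map Sum.inr_injective).subperm (by simp [subset_def, hl])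
  simpa [countP_map, Function.comp_def] using hsub.countP_le (·.isRight)

theorem IsOrderingOf.filterMap_getLeft {π : List (V ⊕ Fin t)}
    (hπ : IsOrderingOf Set.univ π) : IsOrderingOf Set.univ (π.filterMap Sum.getLeft?) := by
  refine ⟨hπ.1.filterMap fun _ _ _ h h' => ?_, fun v => ?_⟩
  · rw [Option.mem_def, Sum.getLeft?_eq_some_iff] at h h'
    rw [h, h']
  · simpa using (hπ.2 (Sum.inl v)).2 trivial

theorem IsOrderingOf.inr_append_inl {π : List V} (hπ : IsOrderingOf Set.univ π) :
    IsOrderingOf Set.univ ((finRange t).map Sum.inr ++ π.map Sum.inl) := by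
  refine ⟨((nodup_finRange t).map Sum.inr_injective).append (hπ.1.map Sum.inl_injective)
    (by simp [List.Disjoint]), ?_⟩
  rintro (v | x)
  · simpa using (hπ.2 v).2 trivial
  · simp

theorem insert_inr_image_inl_mem_extendedEdges {A : Set V} (hA : A ∈ E) (x : Fin t) :
    insert (Sum.inr x) (Sum.inl '' A) ∈ ExtendedEdges t E :=
  .inr ⟨A, hA, x, Set.union_singleton.symm⟩

theorem preimage_inl_mem_of_mem_extendedEdges {A' : Set (V ⊕ Fin t)}
    (h : A' ∈ ExtendedEdges t E) : Sum.inl ⁻¹' A' ∈ E := by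
  rcases h with ⟨A, hA, rfl⟩ | ⟨A, hA, x, rfl⟩ <;>
    convert hA using 1 <;> ext <;> simp

theorem eq_of_inr_mem_extendedEdges {A' : Set (V ⊕ Fin t)} (h : A' ∈ ExtendedEdges t E)
    {x y : Fin t} (hx : Sum.inr x ∈ A') (hy : Sum.inr y ∈ A') : x = y := by
  rcases h with ⟨A, -, rfl⟩ | ⟨A, -, z, rfl⟩ <;> simp_all

end Extension

section Patterns

variable {V : Type*} {t : ℕ} {E : Set (Set V)}

theorem exists_formPattern_of_formPattern_extended {n : ℕ} {π : List V}
    {A' B' : Set (V ⊕ Fin t)} (hA' : A' ∈ ExtendedEdges t E) (hB' : B' ∈ ExtendedEdges t E)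
    (h : FormPattern n A' B' ((finRange t).map Sum.inr ++ π.map Sum.inl)) :
    ∃ A ∈ E, ∃ B ∈ E, FormPattern (n - 2) A B π := by
  obtain ⟨w, hw, rfl, halt⟩ := formPattern_iff.1 h
  obtain ⟨w₁, w₂, rfl, h₁, h₂⟩ := sublist_append_iff.1 hw
  -- otherwise entries `0` and `2` would be distinct new vertices, both in `A'`
  have hw₁ : w₁.length ≤ 2 := by
    by_contra! hlt
    obtain ⟨x, y, z, r, rfl⟩ : ∃ x y z r, w₁ = x :: y :: z :: r :=
      match w₁, hlt with
      | x :: y :: z :: r, _ => ⟨x, y, z, r, rfl⟩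
    have hnd := h₁.nodup ((nodup_finRange t).map Sum.inr_injective)
    obtain ⟨i, -, rfl⟩ := mem_map.1 (h₁.subset mem_cons_self)
    obtain ⟨j, -, rfl⟩ :=
      mem_map.1 (h₁.subset (mem_cons_of_mem _ (mem_cons_of_mem _ mem_cons_self)))
    have hij : i = j := eq_of_inr_mem_extendedEdges hA' halt.1.1 halt.2.2.1.1
    simp [hij] at hnd
  have hdrop : (w₁ ++ w₂).drop 2 <+ π.map Sum.inl := by
    rw [drop_append, drop_eq_nil_of_le hw₁, nil_append]
    exact (drop_sublist _ _).trans h₂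
  obtain ⟨v, hv, hveq⟩ := sublist_map_iff.1 hdrop
  refine ⟨_, preimage_inl_mem_of_mem_extendedEdges hA', _,
    preimage_inl_mem_of_mem_extendedEdges hB', formPattern_iff.2 ⟨v, hv, ?_, ?_⟩⟩
  · simpa using (congrArg length hveq).symm
  · exact isAlternating_map.1 (hveq ▸ halt.drop_two)

theorem exists_formPattern_extended_of_formPattern {n : ℕ} (hnt : n + 2 ≤ t)
    {π' : List (V ⊕ Fin t)} (hπ' : IsOrderingOf Set.univ π') {A B : Set V} (hA : A ∈ E)
    (hB : B ∈ E) (h : FormPattern n A B (π'.filterMap Sum.getLeft?)) :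
    ∃ A' ∈ ExtendedEdges t E, ∃ B' ∈ ExtendedEdges t E, FormPattern (n + 2) A' B' π' := by
  obtain ⟨w, hw, rfl, halt⟩ := formPattern_iff.1 h
  have hsub : w.map Sum.inl <+ π' :=
    (hw.map Sum.inl).trans (map_inl_filterMap_getLeft π' ▸ filter_sublist)
  have halt' : IsAlternating (Sum.inl '' A : Set (V ⊕ Fin t)) (Sum.inl '' B) (w.map Sum.inl) := by
    rwa [isAlternating_map, Set.preimage_image_eq _ Sum.inl_injective,
      Set.preimage_image_eq _ Sum.inl_injective]
  have hcount : (w.map (Sum.inl : V → V ⊕ Fin t)).length + 2 ≤ π'.countP (·.isRight) := by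
    simpa using hnt.trans (le_countP_isRight fun x => (hπ'.2 _).2 trivial)
  obtain ⟨w₁, w₂, a, b, hw₁₂, ha, hb, hsub'⟩ :=
    exists_pair_sublist_in_gap hsub (by simp) hcount
  obtain ⟨x, rfl⟩ := Sum.isRight_iff.1 ha
  obtain ⟨y, rfl⟩ := Sum.isRight_iff.1 hb
  have hxy : (Sum.inr x : V ⊕ Fin t) ≠ Sum.inr y := by
    have := hsub'.nodup hπ'.1
    simp_all [nodup_append]
  obtain ⟨p, q, hpq, halt''⟩ := (hw₁₂ ▸ halt').insert_pair hxy (by simp) (by simp)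
  obtain ⟨⟨u, rfl⟩, ⟨v, rfl⟩⟩ : (∃ u, p = Sum.inr u) ∧ ∃ v, q = Sum.inr v := by
    rcases hpq with ⟨rfl, rfl⟩ | ⟨rfl, rfl⟩ <;> exact ⟨⟨_, rfl⟩, ⟨_, rfl⟩⟩
  refine ⟨_, insert_inr_image_inl_mem_extendedEdges hA u, _,
    insert_inr_image_inl_mem_extendedEdges hB v, formPattern_iff.2 ⟨_, hsub', ?_, halt''⟩⟩
  have := congrArg length hw₁₂
  simp only [length_map, length_append] at this
  simp only [length_append, length_cons]
  omega

end Patterns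

theorem ABkA_free_iff_extended_general {V : Type*} (E : Set (Set V))
    (k : ℕ) (hk : 0 < k) :
    HasFreeOrdering (2 * k - 1) (Set.univ : Set V) E ↔
      HasFreeOrdering (2 * k + 1) (Set.univ : Set (V ⊕ Fin (2 * k + 1)))
        (ExtendedEdges (2 * k + 1) E) := by
  constructor
  · rintro ⟨π, hπ, hfree⟩
    refine ⟨_, hπ.inr_append_inl, fun A' hA' B' hB' hpat => ?_⟩
    obtain ⟨A, hA, B, hB, hAB⟩ := exists_formPattern_of_formPattern_extended hA' hB' hpat
    exact hfree A hA B hB (by rwa [show 2 * k + 1 - 2 = 2 * k - 1 by omega] at hAB)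
  · rintro ⟨π', hπ', hfree⟩
    refine ⟨_, hπ'.filterMap_getLeft, fun A hA B hB hpat => ?_⟩
    obtain ⟨A', hA', B', hB', hAB⟩ :=
      exists_formPattern_extended_of_formPattern (by omega) hπ' hA hB hpat
    exact hfree A' hA' B' hB' (by rwa [show 2 * k - 1 + 2 = 2 * k + 1 by omega] at hAB)

/-- **Lemma (odd–odd).** A hypergraph `H = (V, E)` is `(AB)^(k-1) A`-free if
and only if the hypergraph `H_{2k+1}`, obtained from `H` by adding `2k+1` new
vertices and extending each edge by each single new vertex, is `(AB)^k A`-free.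
(An `(AB)^(k-1) A` pattern has length `2k - 1`; an `(AB)^k A` pattern has
length `2k + 1`.) -/
theorem ABkA_free_iff_extended {V : Type*} [Fintype V] (E : Set (Set V))
    (k : ℕ) (hk : 0 < k) :
    HasFreeOrdering (2 * k - 1) (Set.univ : Set V) E ↔
      HasFreeOrdering (2 * k + 1) (Set.univ : Set (V ⊕ Fin (2 * k + 1)))
        (ExtendedEdges (2 * k + 1) E) :=
  ABkA_free_iff_extended_general E k hk
end
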